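/- arXiv:1805.02746 — 3 statements merged into one kernel-verified Lean document; each statement's English description precedes it below -/
import Mathlib

section
/- Let 𝒜 and ℬ be regular families of finite subsets of ℕ, and suppose E is a proper initial segment of F ∈ 𝒜[ℬ]. Then either E ∈ 𝒜'[ℬ] (where 𝒜' is the Cantor–Bendixson derivative of 𝒜) or F \ E ∈ ℬ. -/
/-- Identify a finite subset of `ℕ` with a point of the Cantor space `ℕ → Bool`. -/
def toCantor (F : Finset ℕ) : ℕ → Bool := fun n => decide (n ∈ F)

/-- Hereditary: closed under subsets. -/
def Hereditary (G : Set (Finset ℕ)) : Prop := ∀ ⦃E F : Finset ℕ⦄, E ⊆ F → F ∈ G → E ∈ G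

/-- Spreading: closed under replacing elements by larger ones, keeping the
increasing order and the cardinality. -/
def Spreading (G : Set (Finset ℕ)) : Prop :=
  ∀ (E : Finset ℕ) (f : ℕ → ℕ), StrictMonoOn f ↑E → (∀ n ∈ E, n ≤ f n) →
    E ∈ G → E.image f ∈ G

/-- Regular: compact (in the Cantor topology), hereditary and spreading. -/
def IsRegularFam (G : Set (Finset ℕ)) : Prop :=
  IsCompact (toCantor '' G) ∧ Hereditary G ∧ Spreading G

/-- The Cantor–Bendixson derivative. -/
def cbDeriv {α : Type*} [TopologicalSpace α] (K : Set α) : Set α :=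
  {x | x ∈ K ∧ x ∈ closure (K \ {x})}

/-- Transfinite Cantor–Bendixson iterates. -/
noncomputable def cbIter {α : Type*} [TopologicalSpace α] (K : Set α) (ξ : Ordinal) : Set α :=
  Ordinal.limitRecOn ξ K (fun _ S => cbDeriv S)
    (fun o _ ih => ⋂ (ζ : Ordinal) (h : ζ < o), ih ζ h)

/-- The family `ℱ[𝒢]`, consisting of `∅` together with all unions
`E₁ ∪ ⋯ ∪ Eₙ` where `∅ ≠ Eᵢ ∈ 𝒢`, `E₁ < ⋯ < Eₙ` and `(min E₁, …, min Eₙ) ∈ ℱ`. -/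
def famComb (F G : Set (Finset ℕ)) : Set (Finset ℕ) :=
  {∅} ∪ {E | ∃ (n : ℕ) (Es : Fin n → Finset ℕ) (mins : Fin n → ℕ),
    (∀ i, Es i ∈ G ∧ (Es i).Nonempty) ∧
    (∀ i j : Fin n, i < j → ∀ a ∈ Es i, ∀ b ∈ Es j, a < b) ∧
    (∀ i, IsLeast (↑(Es i) : Set ℕ) (mins i)) ∧
    Finset.univ.image mins ∈ F ∧
    E = Finset.univ.biUnion Es}

/-- `E` is a proper initial segment of `F`: `E` consists of the first `|E|` elements
of `F` and `E ≠ F`. -/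
def IsProperInitialSegment (E F : Finset ℕ) : Prop :=
  E ⊆ F ∧ E ≠ F ∧ ∀ a ∈ E, ∀ b ∈ F, b ∉ E → a < b

/-- The Cantor–Bendixson derivative `𝒜'` of a family of finite sets, viewed again as a
family of finite sets. -/
def famDeriv (A : Set (Finset ℕ)) : Set (Finset ℕ) :=
  {E : Finset ℕ | toCantor E ∈ cbDeriv (toCantor '' A)}

lemma toCantor_inj : Function.Injective toCantor := by
  intro s t h
  ext n
  have := congrFun h n
  simpa [toCantor, decide_eq_decide] using this

lemma mem_famDeriv_of_extend {A : Set (Finset ℕ)} (hA : IsRegularFam A)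
    {M : Finset ℕ} {m' : ℕ} (hlt : ∀ a ∈ M, a < m')
    (hMA : insert m' M ∈ A) : M ∈ famDeriv A := by
  obtain ⟨-, hHer, hSpread⟩ := hA
  have hM : M ∈ A := hHer (Finset.subset_insert _ _) hMA
  have hins : ∀ t : ℕ, insert (m' + t) M ∈ A := by
    intro t
    have hid : ∀ x ∈ M, (if x = m' then m' + t else x) = x := by
      intro x hx
      rw [if_neg]
      have := hlt x hx; omega
    have := hSpread (insert m' M) (fun x => if x = m' then m' + t else x) ?_ ?_ hMA
    · rwa [Finset.image_insert, if_pos rfl, Finset.image_congr hid, Finset.image_id'] at this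
    · intro a ha b hb hab
      simp only [Finset.coe_insert, Set.mem_insert_iff, Finset.mem_coe] at ha hb
      have ha' : a = m' ∨ a < m' := by
        rcases ha with rfl | h
        · exact Or.inl rfl
        · exact Or.inr (hlt _ h)
      have hb' : b = m' ∨ b < m' := by
        rcases hb with rfl | h
        · exact Or.inl rfl
        · exact Or.inr (hlt _ h)
      simp only
      split_ifs with h1 h2 h2 <;> omega
    · intro x hx
      split_ifs <;> omega
  have htend : Filter.Tendsto (fun t => toCantor (insert (m' + t) M)) Filter.atTop
      (nhds (toCantor M)) := by
    rw [tendsto_pi_nhds]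
    intro j
    refine Filter.Tendsto.congr' ?_ tendsto_const_nhds
    filter_upwards [Filter.eventually_ge_atTop (j + 1)] with t ht
    have hj : j ≠ m' + t := by omega
    simp [toCantor, Finset.mem_insert, hj]
  refine ⟨⟨M, hM, rfl⟩, ?_⟩
  refine mem_closure_of_tendsto htend ?_
  filter_upwards with t
  refine ⟨⟨insert (m' + t) M, hins t, rfl⟩, ?_⟩
  intro hmem
  have h1 : insert (m' + t) M = M := toCantor_inj hmem
  have h2 : m' + t ∈ M := h1 ▸ Finset.mem_insert_self _ _
  have := hlt _ h2
  omega
lemma construct_mem {A B : Set (Finset ℕ)} (hA : IsRegularFam A) (hB : IsRegularFam B)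
    {n : ℕ} {Es : Fin n → Finset ℕ} {mins : Fin n → ℕ}
    (h1 : ∀ i, Es i ∈ B ∧ (Es i).Nonempty)
    (h2 : ∀ i j : Fin n, i < j → ∀ a ∈ Es i, ∀ b ∈ Es j, a < b)
    (h3 : ∀ i, IsLeast (↑(Es i) : Set ℕ) (mins i))
    (h4 : Finset.univ.image mins ∈ A)
    {K : ℕ} (hK : K + 1 < n)
    {E'' : Finset ℕ} (hE1 : E''.Nonempty) (hE2 : E'' ⊆ Es ⟨K, by omega⟩)
    (hE3 : mins ⟨K, by omega⟩ ∈ E'')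
    {E : Finset ℕ}
    (hEeq : ∀ x, x ∈ E ↔ ∃ i : Fin (K + 1),
        x ∈ (if h : (i : ℕ) < K then Es ⟨i, by omega⟩ else E'')) :
    E ∈ famComb (famDeriv A) B := by
  have hAHer := hA.2.1
  have hBHer := hB.2.1
  have hmono : ∀ i j : Fin n, i < j → mins i < mins j :=
    fun i j hij => h2 i j hij _ (h3 i).1 _ (h3 j).1
  set emb : Fin (K + 1) → Fin n := fun i => ⟨i, by omega⟩ with hemb
  set Es' : Fin (K + 1) → Finset ℕ :=
    fun i => if h : (i : ℕ) < K then Es ⟨i, by omega⟩ else E'' with hEs'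
  have hsub : ∀ i, Es' i ⊆ Es (emb i) := by
    intro i
    by_cases h : (i : ℕ) < K
    · simp only [hEs', dif_pos h]
      exact Finset.Subset.refl _
    · have hiK : emb i = ⟨K, by omega⟩ := Fin.ext (by simp [hemb]; omega)
      simp only [hEs', dif_neg h, hiK]
      exact hE2
  have hleast : ∀ i, IsLeast (↑(Es' i) : Set ℕ) (mins (emb i)) := by
    intro i
    constructor
    · by_cases h : (i : ℕ) < K
      · simp only [hEs', dif_pos h]
        exact (h3 _).1
      · have hiK : emb i = ⟨K, by omega⟩ := Fin.ext (by simp [hemb]; omega)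
        simp only [hEs', dif_neg h, hiK]
        exact hE3
    · intro x hx
      exact (h3 (emb i)).2 (hsub i hx)
  refine Or.inr ⟨K + 1, Es', fun i => mins (emb i), ?_, ?_, ?_, ?_, ?_⟩
  · intro i
    by_cases h : (i : ℕ) < K
    · simp only [hEs', dif_pos h]
      exact h1 _
    · simp only [hEs', dif_neg h]
      exact ⟨hBHer hE2 (h1 _).1, hE1⟩
  · intro i j hij a ha b hb
    exact h2 (emb i) (emb j) hij a (hsub i ha) b (hsub j hb)
  · exact hleast
  · have hm' : ∀ a ∈ Finset.univ.image (fun i => mins (emb i)), a < mins ⟨K + 1, hK⟩ := by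
      intro a ha
      obtain ⟨i, -, rfl⟩ := Finset.mem_image.mp ha
      exact hmono (emb i) ⟨K + 1, hK⟩ i.isLt
    have hsubA : insert (mins ⟨K + 1, hK⟩) (Finset.univ.image (fun i => mins (emb i)))
        ⊆ Finset.univ.image mins := by
      intro x hx
      rcases Finset.mem_insert.mp hx with rfl | hx
      · exact Finset.mem_image.mpr ⟨⟨K + 1, hK⟩, Finset.mem_univ _, rfl⟩
      · obtain ⟨i, -, rfl⟩ := Finset.mem_image.mp hx
        exact Finset.mem_image.mpr ⟨emb i, Finset.mem_univ _, rfl⟩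
    exact mem_famDeriv_of_extend hA hm' (hAHer hsubA h4)
  · ext x
    rw [hEeq x, Finset.mem_biUnion]
    constructor
    · rintro ⟨i, hi⟩
      exact ⟨i, Finset.mem_univ _, hi⟩
    · rintro ⟨i, -, hi⟩
      exact ⟨i, hi⟩
/-- If `𝒜, ℬ` are regular and `E` is a proper initial segment of `F ∈ 𝒜[ℬ]`, then
either `E ∈ 𝒜'[ℬ]` or `F \ E ∈ ℬ`. -/
theorem initialSegment_famComb (A B : Set (Finset ℕ))
    (hA : IsRegularFam A) (hB : IsRegularFam B) (E F : Finset ℕ)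
    (hEF : IsProperInitialSegment E F) (hF : F ∈ famComb A B) :
    E ∈ famComb (famDeriv A) B ∨ F \ E ∈ B := by
  classical
  obtain ⟨hEsub, hEne, hinit⟩ := hEF
  rcases hF with hF0 | ⟨n, Es, mins, h1, h2, h3, h4, hFeq⟩
  · exfalso
    apply hEne
    have : F = ∅ := hF0
    rw [this] at hEsub ⊢
    exact Finset.subset_empty.mp hEsub
  subst hFeq
  by_cases hEemp : E = ∅
  · exact Or.inl (Or.inl hEemp)
  -- find the first block not contained in E
  have hex : ∃ j, ∃ h : j < n, ¬ Es ⟨j, h⟩ ⊆ E := by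
    obtain ⟨y, hyF, hyE⟩ := Finset.exists_of_ssubset (hEsub.ssubset_of_ne hEne)
    obtain ⟨i, -, hyi⟩ := Finset.mem_biUnion.mp hyF
    exact ⟨i, i.isLt, fun hs => hyE (hs (by simpa using hyi))⟩
  set k := Nat.find hex with hkdef
  obtain ⟨hkn, hknsub⟩ := Nat.find_spec hex
  have hsubE : ∀ (j : Fin n), (j : ℕ) < k → Es j ⊆ E := by
    intro j hj
    by_contra hc
    exact Nat.find_min hex hj ⟨j.isLt, by simpa using hc⟩
  have hminF : ∀ i : Fin n, mins i ∈ Finset.univ.biUnion Es :=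
    fun i => Finset.mem_biUnion.mpr ⟨i, Finset.mem_univ _, (h3 i).1⟩
  have hminE : ∀ i : Fin n, (E ∩ Es i).Nonempty → mins i ∈ E := by
    intro i ⟨x, hx⟩
    rw [Finset.mem_inter] at hx
    by_contra h
    have h5 : x < mins i := hinit x hx.1 (mins i) (hminF i) h
    have h6 : mins i ≤ x := (h3 i).2 hx.2
    omega
  have hdisj : ∀ (j : Fin n), k < (j : ℕ) → ∀ x ∈ E, x ∉ Es j := by
    intro j hj x hxE hxj
    obtain ⟨y, hy1, hy2⟩ := Finset.not_subset.mp hknsub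
    have hyF : y ∈ Finset.univ.biUnion Es :=
      Finset.mem_biUnion.mpr ⟨⟨k, hkn⟩, Finset.mem_univ _, hy1⟩
    have hxy : x < y := hinit x hxE y hyF hy2
    have hyx : y < x := h2 ⟨k, hkn⟩ j hj y hy1 x hxj
    omega
  by_cases hlast : k + 1 < n
  · -- left disjunct
    left
    by_cases hE' : (E ∩ Es ⟨k, hkn⟩).Nonempty
    · -- E cuts into block k
      refine construct_mem hA hB h1 h2 h3 h4 hlast (K := k) (E'' := E ∩ Es ⟨k, hkn⟩) hE'
        Finset.inter_subset_right
        (Finset.mem_inter.mpr ⟨hminE _ hE', (h3 _).1⟩) ?_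
      intro x
      constructor
      · intro hxE
        obtain ⟨i, -, hxi⟩ := Finset.mem_biUnion.mp (hEsub hxE)
        rcases lt_trichotomy (i : ℕ) k with hik | hik | hik
        · refine ⟨⟨i, by omega⟩, ?_⟩
          rw [dif_pos (by simpa using hik)]
          exact hxi
        · refine ⟨⟨k, by omega⟩, ?_⟩
          rw [dif_neg (by simp)]
          have hieq : i = (⟨k, hkn⟩ : Fin n) := Fin.ext (show (i : ℕ) = k from hik)
          rw [hieq] at hxi
          exact Finset.mem_inter.mpr ⟨hxE, hxi⟩
        · exact absurd hxi (hdisj i hik x hxE)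
      · rintro ⟨i, hi⟩
        by_cases h : (i : ℕ) < k
        · rw [dif_pos h] at hi
          exact hsubE _ (by simpa using h) hi
        · rw [dif_neg h] at hi
          exact (Finset.mem_inter.mp hi).1
    · -- E consists of full blocks 0..k-1 ; k ≥ 1
      have hEdk : E ∩ Es ⟨k, hkn⟩ = ∅ := Finset.not_nonempty_iff_eq_empty.mp hE'
      have hk1 : 1 ≤ k := by
        by_contra hk0
        have hk0' : k = 0 := by omega
        obtain ⟨x, hxE⟩ := Finset.nonempty_iff_ne_empty.mpr hEemp
        obtain ⟨i, -, hxi⟩ := Finset.mem_biUnion.mp (hEsub hxE)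
        rcases lt_trichotomy (i : ℕ) k with hik | hik | hik
        · omega
        · have hieq : i = (⟨k, hkn⟩ : Fin n) := Fin.ext (show (i : ℕ) = k from hik)
          rw [hieq] at hxi
          exact absurd (Finset.mem_inter.mpr ⟨hxE, hxi⟩) (by simp [hEdk])
        · exact hdisj i hik x hxE hxi
      have hKn : (k - 1) + 1 < n := by omega
      refine construct_mem hA hB h1 h2 h3 h4 hKn (K := k - 1) (E'' := Es ⟨k - 1, by omega⟩)
        (h1 _).2 (Finset.Subset.refl _) (h3 _).1 ?_
      intro x
      constructor
      · intro hxE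
        obtain ⟨i, -, hxi⟩ := Finset.mem_biUnion.mp (hEsub hxE)
        rcases lt_trichotomy (i : ℕ) k with hik | hik | hik
        · by_cases hik1 : (i : ℕ) < k - 1
          · refine ⟨⟨i, by omega⟩, ?_⟩
            rw [dif_pos (by simpa using hik1)]
            exact hxi
          · refine ⟨⟨k - 1, by omega⟩, ?_⟩
            rw [dif_neg (by simp)]
            have hieq : i = (⟨k - 1, by omega⟩ : Fin n) := Fin.ext (show (i : ℕ) = k - 1 by omega)
            rwa [hieq] at hxi
        · have hieq : i = (⟨k, hkn⟩ : Fin n) := Fin.ext (show (i : ℕ) = k from hik)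
          rw [hieq] at hxi
          exact absurd (Finset.mem_inter.mpr ⟨hxE, hxi⟩) (by simp [hEdk])
        · exact absurd hxi (hdisj i hik x hxE)
      · rintro ⟨i, hi⟩
        by_cases h : (i : ℕ) < k - 1
        · rw [dif_pos h] at hi
          exact hsubE _ (show ((i : ℕ) : ℕ) < k by omega) hi
        · rw [dif_neg h] at hi
          exact hsubE ⟨k - 1, by omega⟩ (show k - 1 < k by omega) hi
  · -- k is the last block : right disjunct
    right
    have hsdiff : (Finset.univ.biUnion Es) \ E ⊆ Es ⟨k, hkn⟩ := by
      intro x hx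
      rw [Finset.mem_sdiff] at hx
      obtain ⟨i, -, hxi⟩ := Finset.mem_biUnion.mp hx.1
      have hik : (i : ℕ) = k := by
        rcases lt_trichotomy (i : ℕ) k with h | h | h
        · exact absurd (hsubE i h hxi) hx.2
        · exact h
        · omega
      have hieq : i = (⟨k, hkn⟩ : Fin n) := Fin.ext (show (i : ℕ) = k from hik)
      rwa [hieq] at hxi
    exact hB.2.1 hsdiff (h1 ⟨k, hkn⟩).1
end

section
/- Let X be a Banach space, K ⊆ X* weak*-compact, Z ⊆ X a closed subspace with dim(X/Z) < ∞, and x* ∈ s_ε(K) (the ε-Szlenk derivative of K). Then for any 0 < δ < ε/4 and any weak*-neighborhood v of x*, there exist y* ∈ K ∩ v and z ∈ B_Z with Re y*(z) > δ. -/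
open Ordinal

variable {X : Type*} [NormedAddCommGroup X] [NormedSpace ℝ X]

/-- The dual norm of a weak-star functional. -/
noncomputable def dualNorm (f : WeakDual ℝ X) : ℝ := ‖WeakDual.toStrongDual f‖

/-- The `ε`-Szlenk derivative of a weak*-compact set `K ⊆ X*`: the points of `K` all of
whose weak*-neighborhoods meet `K` in a set of diameter `> ε`. -/
def szDeriv (ε : ℝ) (K : Set (WeakDual ℝ X)) : Set (WeakDual ℝ X) :=
  {f | f ∈ K ∧ ∀ v ∈ nhds f, ∃ g ∈ v ∩ K, ∃ h ∈ v ∩ K, ε < dualNorm (g - h)}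

/-- Transfinite iterates of the `ε`-Szlenk derivative. -/
noncomputable def szIter (ε : ℝ) (K : Set (WeakDual ℝ X)) (ξ : Ordinal) :
    Set (WeakDual ℝ X) :=
  Ordinal.limitRecOn ξ K (fun _ S => szDeriv ε S)
    (fun o _ ih => ⋂ (ζ : Ordinal) (h : ζ < o), ih ζ h)

set_option maxHeartbeats 1000000 in
/-- Let `X` be a Banach space, `K ⊆ X*` weak*-compact, `Z ⊆ X` a closed subspace of
finite codimension, and `x* ∈ s_ε(K)`. Then for any `0 < δ < ε/4` and any
weak*-neighborhood `v` of `x*`, there exist `y* ∈ K ∩ v` and `z` in the unit ball of `Z`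
with `Re y*(z) > δ`. -/
theorem szDeriv_slice {X : Type*} [NormedAddCommGroup X] [NormedSpace ℝ X]
    [CompleteSpace X] (K : Set (WeakDual ℝ X)) (hK : IsCompact K)
    (Z : Submodule ℝ X) (hZ : IsClosed (Z : Set X)) (hcodim : FiniteDimensional ℝ (X ⧸ Z))
    (ε δ : ℝ) (hδ : 0 < δ) (hδε : δ < ε / 4)
    (x : WeakDual ℝ X) (hx : x ∈ szDeriv ε K) (v : Set (WeakDual ℝ X)) (hv : v ∈ nhds x) :
    ∃ y ∈ K ∩ v, ∃ z ∈ Z, ‖z‖ ≤ 1 ∧ δ < y z := by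
  classical
  haveI : IsClosed (Z : Set X) := hZ
  -- K is norm-bounded (Banach–Steinhaus)
  obtain ⟨M, hM⟩ : ∃ M : ℝ, ∀ f ∈ K, ‖WeakDual.toStrongDual f‖ ≤ M := by
    have hpt : ∀ x' : X, ∃ C, ∀ f : K,
        ‖WeakDual.toStrongDual (f : WeakDual ℝ X) x'‖ ≤ C := by
      intro x'
      have hc : IsCompact ((fun f : WeakDual ℝ X => ‖f x'‖) '' K) :=
        hK.image (continuous_norm.comp (WeakDual.eval_continuous x'))
      obtain ⟨C, hC⟩ := hc.bddAbove
      exact ⟨C, fun f => hC ⟨(f : WeakDual ℝ X), f.2, rfl⟩⟩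
    obtain ⟨M, hM⟩ := banach_steinhaus
      (g := fun f : K => WeakDual.toStrongDual (f : WeakDual ℝ X)) hpt
    exact ⟨M, fun f hf => hM ⟨f, hf⟩⟩
  have hxK : x ∈ K := hx.1
  have hM0 : 0 ≤ M := le_trans (norm_nonneg _) (hM x hxK)
  -- constants
  set β : ℝ := (ε - 4 * δ) / 8 with hβdef
  have hβpos : 0 < β := by
    have : 0 < ε - 4 * δ := by linarith
    positivity
  have hDpos : 0 < 4 * M + 8 * δ + 1 := by positivity
  set γ : ℝ := β / (4 * M + 8 * δ + 1) with hγdef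
  have hγpos : 0 < γ := div_pos hβpos hDpos
  have hγD : γ * (4 * M + 8 * δ + 1) = β := div_mul_cancel₀ β (ne_of_gt hDpos)
  have hkey : 4 * M * γ + 8 * δ * γ ≤ β := by nlinarith [hγpos.le]
  -- a finite net of the unit ball of the quotient
  have hball : IsCompact (Metric.closedBall (0 : X ⧸ Z) 1) := isCompact_closedBall 0 1
  obtain ⟨t, htfin, htsub⟩ := Metric.totallyBounded_iff.mp hball.totallyBounded γ hγpos
  -- lifts of quotient elements with almost the same norm
  have hlift : ∀ c : X ⧸ Z, ∃ w : X, (Submodule.Quotient.mk w : X ⧸ Z) = c ∧ ‖w‖ < ‖c‖ + γ :=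
    fun c => Submodule.Quotient.norm_mk_lt c hγpos
  choose w hw hwn using hlift
  -- the shrunk weak* neighborhood
  set U : Set (WeakDual ℝ X) :=
    v ∩ ⋂ c ∈ t, {f : WeakDual ℝ X | |f (w c) - x (w c)| < β} with hUdef
  have hU : U ∈ nhds x := by
    refine Filter.inter_mem hv ?_
    rw [Filter.biInter_mem htfin]
    intro c hc
    have hcont : Continuous fun f : WeakDual ℝ X => |f (w c) - x (w c)| :=
      ((WeakDual.eval_continuous (w c)).sub continuous_const).abs
    have hopen : IsOpen {f : WeakDual ℝ X | |f (w c) - x (w c)| < β} :=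
      isOpen_lt hcont continuous_const
    exact hopen.mem_nhds (by simp [hβpos])
  obtain ⟨g, ⟨hgU, hgK⟩, h, ⟨hhU, hhK⟩, hgh⟩ := hx.2 U hU
  -- the difference functional
  set f : StrongDual ℝ X := WeakDual.toStrongDual g - WeakDual.toStrongDual h with hfdef
  have hfn : ε < ‖f‖ := by
    unfold dualNorm at hgh
    rw [map_sub] at hgh
    exact hgh
  have hfnorm : ‖f‖ ≤ 2 * M := by
    calc ‖f‖ ≤ ‖WeakDual.toStrongDual g‖ + ‖WeakDual.toStrongDual h‖ := norm_sub_le _ _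
    _ ≤ M + M := add_le_add (hM g hgK) (hM h hhK)
    _ = 2 * M := by ring
  -- an almost-norming vector for f
  obtain ⟨x', hx'n, hx'v⟩ : ∃ x' : X, ‖x'‖ ≤ 1 ∧ ε < f x' := by
    obtain ⟨u, hu1, hu2⟩ := f.exists_lt_apply_of_lt_opNorm hfn
    rcases le_or_gt 0 (f u) with h0 | h0
    · exact ⟨u, hu1.le, by rwa [Real.norm_eq_abs, abs_of_nonneg h0] at hu2⟩
    · refine ⟨-u, by rw [norm_neg]; exact hu1.le, ?_⟩
      rw [map_neg]
      rwa [Real.norm_eq_abs, abs_of_neg h0] at hu2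
  -- decompose x' modulo Z using the net
  set q : X ⧸ Z := Submodule.Quotient.mk x' with hqdef
  have hq1 : ‖q‖ ≤ 1 := le_trans (Submodule.Quotient.norm_mk_le Z x') hx'n
  have hqball : q ∈ Metric.closedBall (0 : X ⧸ Z) 1 := by
    rwa [Metric.mem_closedBall, dist_zero_right]
  obtain ⟨c, hct, hqc⟩ : ∃ c ∈ t, q ∈ Metric.ball c γ := by
    simpa using htsub hqball
  have hqcn : ‖q - c‖ < γ := by rwa [Metric.mem_ball, dist_eq_norm] at hqc
  have hcn : ‖c‖ < 1 + γ := by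
    have h1 : ‖q + (c - q)‖ ≤ ‖q‖ + ‖c - q‖ := norm_add_le q (c - q)
    have h2 : q + (c - q) = c := by abel
    rw [h2] at h1
    have h3 : ‖c - q‖ < γ := by rwa [norm_sub_rev] at hqcn
    linarith
  obtain ⟨w', hw'1, hw'2⟩ := Submodule.Quotient.norm_mk_lt (q - c) hγpos
  have hw'n : ‖w'‖ < 2 * γ := by linarith
  -- the element of Z
  set z₀ : X := x' - w c - w' with hz₀def
  have hz₀Z : z₀ ∈ Z := by
    have : (Submodule.Quotient.mk z₀ : X ⧸ Z) = 0 := by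
      rw [hz₀def, Submodule.Quotient.mk_sub, Submodule.Quotient.mk_sub, hw c, hw'1, ← hqdef]
      abel
    exact (Submodule.Quotient.mk_eq_zero Z).mp this
  have hz₀n : ‖z₀‖ ≤ 2 + 4 * γ := by
    calc ‖z₀‖ ≤ ‖x' - w c‖ + ‖w'‖ := norm_sub_le _ _
    _ ≤ ‖x'‖ + ‖w c‖ + ‖w'‖ := by linarith [norm_sub_le x' (w c)]
    _ ≤ 2 + 4 * γ := by
        have h1 := hwn c
        linarith
  -- lower bound for f z₀
  have hfwc : |f (w c)| < 2 * β := by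
    have hg' : |g (w c) - x (w c)| < β := by
      have := hgU.2
      simp only [Set.mem_iInter] at this
      exact this c hct
    have hh' : |h (w c) - x (w c)| < β := by
      have := hhU.2
      simp only [Set.mem_iInter] at this
      exact this c hct
    have hfe : f (w c) = (g (w c) - x (w c)) - (h (w c) - x (w c)) := by
      simp [hfdef, WeakDual.toStrongDual_apply]
    rw [hfe]
    calc |(g (w c) - x (w c)) - (h (w c) - x (w c))|
        ≤ |g (w c) - x (w c)| + |h (w c) - x (w c)| := abs_sub _ _
    _ < 2 * β := by linarith
  have hfw' : |f w'| ≤ 4 * M * γ := by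
    calc |f w'| = ‖f w'‖ := (Real.norm_eq_abs _).symm
    _ ≤ ‖f‖ * ‖w'‖ := f.le_opNorm w'
    _ ≤ (2 * M) * (2 * γ) := by
        apply mul_le_mul hfnorm hw'n.le (norm_nonneg _) (by positivity)
    _ = 4 * M * γ := by ring
  have hfz₀ : ε - 2 * β - 4 * M * γ < f z₀ := by
    have he : f z₀ = f x' - f (w c) - f w' := by rw [hz₀def]; simp
    rw [he]
    have h1 : f (w c) < 2 * β := lt_of_abs_lt hfwc
    have h2 : f w' ≤ 4 * M * γ := le_of_abs_le hfw'
    have h1' : -(2 * β) < f (w c) := neg_lt_of_abs_lt hfwc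
    have h2' : -(4 * M * γ) ≤ f w' := neg_le_of_abs_le hfw'
    linarith
  -- rescale
  have h2γ : (0:ℝ) < 2 + 4 * γ := by positivity
  set zs : X := (2 + 4 * γ)⁻¹ • z₀ with hzsdef
  have hzsZ : zs ∈ Z := Z.smul_mem _ hz₀Z
  have hzsn : ‖zs‖ ≤ 1 := by
    rw [hzsdef, norm_smul, Real.norm_eq_abs, abs_of_pos (inv_pos.mpr h2γ)]
    rw [inv_mul_le_iff₀ h2γ]
    simpa using hz₀n
  have hfzs : f zs = (2 + 4 * γ)⁻¹ * f z₀ := by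
    rw [hzsdef, map_smul]
    exact _root_.smul_eq_mul _ _
  have hmain : 2 * δ < f zs := by
    have h8β : 8 * β = ε - 4 * δ := by rw [hβdef]; ring
    have harith : (2 + 4 * γ) * (2 * δ) ≤ ε - 2 * β - 4 * M * γ := by
      have hexp : (2 + 4 * γ) * (2 * δ) = 4 * δ + 8 * δ * γ := by ring
      rw [hexp]
      linarith [hkey, hβpos]
    have hlt : (2 + 4 * γ) * (2 * δ) < f z₀ := lt_of_le_of_lt harith hfz₀
    have hinv : (0:ℝ) < (2 + 4 * γ)⁻¹ := inv_pos.mpr h2γ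
    calc 2 * δ = (2 + 4 * γ)⁻¹ * ((2 + 4 * γ) * (2 * δ)) := by field_simp
    _ < (2 + 4 * γ)⁻¹ * f z₀ := by exact mul_lt_mul_of_pos_left hlt hinv
    _ = f zs := hfzs.symm
  -- conclude
  have hfsplit : f zs = g zs - h zs := by
    simp [hfdef, WeakDual.toStrongDual_apply]
  rcases lt_or_ge δ (g zs) with hcase | hcase
  · exact ⟨g, ⟨hgK, hgU.1⟩, zs, hzsZ, hzsn, hcase⟩
  · refine ⟨h, ⟨hhK, hhU.1⟩, -zs, Z.neg_mem hzsZ, by rwa [norm_neg], ?_⟩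
    have : h zs < -δ := by
      have := hmain
      rw [hfsplit] at this
      linarith
    rw [map_neg]
    linarith
end

section
/- Let (𝒢ₙ)_{n≥0} be regular families with 𝒢₀ containing all singletons and CB(𝒢ₙ) ≤ ω^ξ for all n, where 0 < ξ < ω₁, and let 1 = θ₀ > θ₁ > ⋯ with θₙ → 0. Then for any 0 < ε ≤ 1, the family {F ∈ [ℕ]^{<ℕ} : every convex combination x of (eᵢ)_{i∈F} satisfies ‖x‖_{(𝒢ₙ,θₙ)} ≥ ε} has Cantor–Bendixson index strictly less than ω^ξ. -/
/-- The Schreier-space norm `‖x‖_𝒢 = max{‖Fx‖_{ℓ₁} : F ∈ 𝒢}` of a finitely supported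
sequence. -/
noncomputable def schNorm (G : Set (Finset ℕ)) (x : ℕ →₀ ℝ) : ℝ :=
  sSup {r | ∃ F ∈ G, r = ∑ i ∈ F, |x i|}

/-- The mixed Schreier norm `‖x‖ = sup_n θₙ ‖x‖_{𝒢ₙ}`. -/
noncomputable def mixedNorm (G : ℕ → Set (Finset ℕ)) (θ : ℕ → ℝ) (x : ℕ →₀ ℝ) : ℝ :=
  ⨆ n : ℕ, θ n * schNorm (G n) x

/-! ### Part 1: the combinatorial rank predicate `big` -/

open Ordinal

universe u

noncomputable def big (A : Set (Finset ℕ)) (ζ : Ordinal.{u}) : Finset ℕ → Prop :=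
  Ordinal.limitRecOn (motive := fun _ => Finset ℕ → Prop) ζ (fun F => F ∈ A)
    (fun _ p F => F ∈ A ∧ ∃ m, (∀ i ∈ F, i < m) ∧ p (insert m F))
    (fun o _ ih F => F ∈ A ∧ ∀ η (h : η < o), ih η h F)

theorem big_zero (A : Set (Finset ℕ)) : big A 0 = fun F => F ∈ A := by
  rw [big, Ordinal.limitRecOn_zero]

theorem big_succ (A : Set (Finset ℕ)) (η : Ordinal) :
    big A (Order.succ η) =
      fun F => F ∈ A ∧ ∃ m, (∀ i ∈ F, i < m) ∧ big A η (insert m F) := by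
  rw [big, Ordinal.limitRecOn_succ]; rfl

theorem big_limit (A : Set (Finset ℕ)) {o : Ordinal} (ho : Order.IsSuccLimit o) :
    big A o = fun F => F ∈ A ∧ ∀ η < o, big A η F := by
  rw [big, Ordinal.limitRecOn_limit _ _ _ _ ho]; rfl

theorem big_mem {A : Set (Finset ℕ)} {ζ : Ordinal} {F : Finset ℕ} (h : big A ζ F) : F ∈ A := by
  rcases Ordinal.zero_or_succ_or_isSuccLimit ζ with rfl | ⟨a, rfl⟩ | hl
  · rwa [big_zero] at h
  · rw [big_succ] at h; exact h.1
  · rw [big_limit _ hl] at h; exact h.1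

theorem big_subset {A : Set (Finset ℕ)} (hA : Hereditary A) (ζ : Ordinal) :
    ∀ E F : Finset ℕ, E ⊆ F → big A ζ F → big A ζ E := by
  induction ζ using Ordinal.induction with
  | _ ζ IH =>
  intro E F hEF hF
  rcases Ordinal.zero_or_succ_or_isSuccLimit ζ with rfl | ⟨a, rfl⟩ | hl
  · rw [big_zero] at *; exact hA hEF hF
  · simp only [big_succ] at hF ⊢
    obtain ⟨hFA, m, hm, hbig⟩ := hF
    exact ⟨hA hEF hFA, m, fun i hi => hm i (hEF hi),
      IH a (Order.lt_succ a) _ _ (Finset.insert_subset_insert m hEF) hbig⟩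
  · simp only [big_limit _ hl] at hF ⊢
    exact ⟨hA hEF hF.1, fun η hη => IH η hη _ _ hEF (hF.2 η hη)⟩

theorem big_mono {A : Set (Finset ℕ)} (hA : Hereditary A) (ζ' : Ordinal) :
    ∀ ζ ≤ ζ', ∀ F, big A ζ' F → big A ζ F := by
  induction ζ' using Ordinal.induction with
  | _ ζ' IH =>
  intro ζ hle F hF
  rcases eq_or_lt_of_le hle with rfl | hlt
  · exact hF
  rcases Ordinal.zero_or_succ_or_isSuccLimit ζ' with rfl | ⟨a, rfl⟩ | hl
  · exact absurd hlt (not_lt_zero' (a := ζ))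
  · simp only [big_succ] at hF
    obtain ⟨hFA, m, hm, hbig⟩ := hF
    have h2 : big A a F := big_subset hA a F (insert m F) (Finset.subset_insert m F) hbig
    exact IH a (Order.lt_succ a) ζ (Order.lt_succ_iff.mp hlt) F h2
  · rw [big_limit _ hl] at hF; exact hF.2 ζ hlt

theorem big_to_empty {A : Set (Finset ℕ)} (hA : Hereditary A) :
    ∀ (n : ℕ) (F : Finset ℕ), F.card = n → ∀ ζ, big A ζ F → big A (ζ + n) ∅ := by
  intro n
  induction n with
  | zero =>
    intro F hF ζ h
    rw [Finset.card_eq_zero] at hF; subst hF; simpa using h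
  | succ k IH =>
    intro F hF ζ h
    have hne : F.Nonempty := by rw [← Finset.card_pos, hF]; omega
    set m := F.max' hne with hm
    have h1 : big A (Order.succ ζ) (F.erase m) := by
      simp only [big_succ]
      refine ⟨hA (Finset.erase_subset m F) (big_mem h), m, ?_, ?_⟩
      · intro i hi
        exact lt_of_le_of_ne (F.le_max' i (Finset.mem_of_mem_erase hi)) (Finset.ne_of_mem_erase hi)
      · rwa [Finset.insert_erase (F.max'_mem hne)]
    have h2 := IH (F.erase m) (by rw [Finset.card_erase_of_mem (F.max'_mem hne), hF]; rfl)
      (Order.succ ζ) h1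
    have h3 : (Order.succ ζ) + (k : Ordinal) = ζ + ((k + 1 : ℕ) : Ordinal) := by
      rw [← Ordinal.add_one_eq_succ, add_assoc]
      congr 1
      norm_cast
      omega
    rwa [h3] at h2

theorem big_spread {A : Set (Finset ℕ)} (hA : Hereditary A) (hS : Spreading A) (ζ : Ordinal) :
    ∀ (F : Finset ℕ) (f : ℕ → ℕ), StrictMonoOn f ↑F → (∀ n ∈ F, n ≤ f n) →
      big A ζ F → big A ζ (F.image f) := by
  induction ζ using Ordinal.induction with
  | _ ζ IH =>
  intro F f hmono hle hF
  rcases Ordinal.zero_or_succ_or_isSuccLimit ζ with rfl | ⟨a, rfl⟩ | hl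
  · rw [big_zero] at *; exact hS F f hmono hle hF
  · simp only [big_succ] at hF ⊢
    obtain ⟨hFA, m, hm, hbig⟩ := hF
    set M := max m ((F.image f).sup id + 1) with hM
    set g : ℕ → ℕ := fun n => if n = m then M else f n with hg
    have hgF : ∀ n ∈ F, g n = f n := fun n hn => if_neg (fun h => absurd h (hm n hn).ne)
    have hgm : g m = M := if_pos rfl
    have himgf_lt : ∀ i ∈ F.image f, i < M := by
      intro i hi
      have : i ≤ (F.image f).sup id := Finset.le_sup (f := id) hi
      omega
    have himg : (insert m F).image g = insert M (F.image f) := by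
      rw [Finset.image_insert]
      rw [hgm]
      congr 1
      exact Finset.image_congr (fun n hn => hgF n hn)
    have hmonoG : StrictMonoOn g ↑(insert m F) := by
      intro a ha b hb hab
      simp only [Finset.coe_insert, Set.mem_insert_iff, Finset.mem_coe] at ha hb
      rcases hb with rfl | hb
      · rcases ha with rfl | ha
        · exact absurd hab (lt_irrefl _)
        · rw [hgF a ha, hgm]
          exact himgf_lt _ (Finset.mem_image_of_mem f ha)
      · rcases ha with rfl | ha
        · exact absurd (hab.trans (hm b hb)) (lt_irrefl _)
        · rw [hgF a ha, hgF b hb]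
          exact hmono ha hb hab
    have hleG : ∀ n ∈ insert m F, n ≤ g n := by
      intro n hn
      rcases Finset.mem_insert.mp hn with rfl | hn
      · rw [hgm]; exact le_max_left _ _
      · rw [hgF n hn]; exact hle n hn
    refine ⟨hS F f hmono hle hFA, M, himgf_lt, ?_⟩
    have h2 := IH a (Order.lt_succ a) (insert m F) g hmonoG hleG hbig
    rwa [himg] at h2
  · simp only [big_limit _ hl] at hF ⊢
    exact ⟨hS F f hmono hle hF.1, fun η hη => IH η hη F f hmono hle (hF.2 η hη)⟩

theorem big_succ_large {A : Set (Finset ℕ)} (hA : Hereditary A) (hS : Spreading A)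
    {η : Ordinal} {F : Finset ℕ} (h : big A (Order.succ η) F) (M₀ : ℕ) :
    ∃ m, M₀ < m ∧ (∀ i ∈ F, i < m) ∧ big A η (insert m F) := by
  simp only [big_succ] at h
  obtain ⟨hFA, m, hm, hbig⟩ := h
  set M := max M₀ (max m (F.sup id)) + 1 with hM
  set g : ℕ → ℕ := fun n => if n = m then M else n with hg
  have hF_lt : ∀ i ∈ F, i < M := by
    intro i hi
    have : i ≤ F.sup id := Finset.le_sup (f := id) hi
    omega
  have hgF : ∀ n ∈ F, g n = n := fun n hn => if_neg (fun h => absurd h (hm n hn).ne)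
  have hgm : g m = M := if_pos rfl
  have himg : (insert m F).image g = insert M F := by
    rw [Finset.image_insert, hgm]
    congr 1
    rw [Finset.image_congr (g := id) (fun n hn => hgF n hn), Finset.image_id]
  have hmonoG : StrictMonoOn g ↑(insert m F) := by
    intro a ha b hb hab
    simp only [Finset.coe_insert, Set.mem_insert_iff, Finset.mem_coe] at ha hb
    rcases hb with rfl | hb
    · rcases ha with rfl | ha
      · exact absurd hab (lt_irrefl _)
      · rw [hgF a ha, hgm]; exact hF_lt a ha
    · rcases ha with rfl | ha
      · exact absurd (hab.trans (hm b hb)) (lt_irrefl _)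
      · rw [hgF a ha, hgF b hb]; exact hab
  have hleG : ∀ n ∈ insert m F, n ≤ g n := by
    intro n hn
    rcases Finset.mem_insert.mp hn with rfl | hn
    · rw [hgm]; omega
    · rw [hgF n hn]
  refine ⟨M, by omega, hF_lt, ?_⟩
  have h2 := big_spread hA hS η (insert m F) g hmonoG hleG hbig
  rwa [himg] at h2

/-! ### Part 2: localizations and band families -/

def loc (A : Set (Finset ℕ)) (q : Finset ℕ) : Set (Finset ℕ) :=
  {D | (∀ i ∈ q, ∀ j ∈ D, i < j) ∧ q ∪ D ∈ A}

theorem loc_hereditary {A : Set (Finset ℕ)} (hA : Hereditary A) (q : Finset ℕ) :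
    Hereditary (loc A q) := by
  intro E F hEF hF
  exact ⟨fun i hi j hj => hF.1 i hi j (hEF hj),
    hA (Finset.union_subset_union (subset_refl q) hEF) hF.2⟩

theorem big_loc {A : Set (Finset ℕ)} (q : Finset ℕ) (ζ : Ordinal) :
    ∀ D, big (loc A q) ζ D → big A ζ (q ∪ D) := by
  induction ζ using Ordinal.induction with
  | _ ζ IH =>
  intro D hD
  rcases Ordinal.zero_or_succ_or_isSuccLimit ζ with rfl | ⟨a, rfl⟩ | hl
  · rw [big_zero] at hD ⊢; exact hD.2
  · simp only [big_succ] at hD ⊢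
    obtain ⟨hDm, m, hm, hbig⟩ := hD
    have h2 := IH a (Order.lt_succ a) _ hbig
    have hmem : insert m D ∈ loc A q := big_mem hbig
    refine ⟨hDm.2, m, ?_, ?_⟩
    · intro i hi
      rcases Finset.mem_union.mp hi with hi | hi
      · exact hmem.1 i hi m (Finset.mem_insert_self m D)
      · exact hm i hi
    · rwa [Finset.union_insert] at h2
  · simp only [big_limit _ hl] at hD ⊢
    exact ⟨hD.1.2, fun η hη => IH η hη D (hD.2 η hη)⟩

/-- The "upper band" family: sets whose localization still has rank above `τ`. -/
def bandK (A : Set (Finset ℕ)) (τ : Ordinal) : Set (Finset ℕ) := {q | big A τ q}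

theorem bandK_hereditary {A : Set (Finset ℕ)} (hA : Hereditary A) (τ : Ordinal) :
    Hereditary (bandK A τ) :=
  fun E F hEF hF => big_subset hA τ E F hEF hF

theorem big_bandK {A : Set (Finset ℕ)} (hA : Hereditary A) (τ : Ordinal) (σ : Ordinal) :
    ∀ q, big (bandK A τ) σ q → big A (τ + σ) q := by
  induction σ using Ordinal.induction with
  | _ σ IH =>
  intro q hq
  rcases Ordinal.zero_or_succ_or_isSuccLimit σ with rfl | ⟨a, rfl⟩ | hl
  · rw [big_zero] at hq; rw [add_zero]; exact hq
  · simp only [big_succ] at hq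
    obtain ⟨hqK, m, hm, hbig⟩ := hq
    have h2 := IH a (Order.lt_succ a) _ hbig
    rw [Ordinal.add_succ]
    simp only [big_succ]
    exact ⟨big_mem hqK, m, hm, h2⟩
  · rw [big_limit _ hl] at hq
    have hlim : Order.IsSuccLimit (τ + σ) := Ordinal.isSuccLimit_add τ hl
    rw [big_limit _ hlim]
    refine ⟨big_mem hq.1, fun ρ hρ => ?_⟩
    rcases (Ordinal.lt_add_iff_of_isSuccLimit hl).mp hρ with ⟨σ', hσ', hρ'⟩
    exact big_mono hA _ ρ hρ'.le _ (IH σ' hσ' q (hq.2 σ' hσ'))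

/-! ### Part 3: topological bridges -/

theorem cbIter_zero {α : Type*} [TopologicalSpace α] (K : Set α) : cbIter K 0 = K := by
  rw [cbIter, Ordinal.limitRecOn_zero]

theorem cbIter_succ {α : Type*} [TopologicalSpace α] (K : Set α) (η : Ordinal) :
    cbIter K (Order.succ η) = cbDeriv (cbIter K η) := by
  rw [cbIter, Ordinal.limitRecOn_succ]; rfl

theorem cbIter_limit {α : Type*} [TopologicalSpace α] (K : Set α) {o : Ordinal} (ho : Order.IsSuccLimit o) :
    cbIter K o = ⋂ (ζ : Ordinal) (_ : ζ < o), cbIter K ζ := by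
  rw [cbIter, Ordinal.limitRecOn_limit _ _ _ _ ho]; rfl

theorem cbIter_subset {α : Type*} [TopologicalSpace α] (K : Set α) (ζ : Ordinal) :
    cbIter K ζ ⊆ K := by
  induction ζ using Ordinal.induction with
  | _ ζ IH =>
  rcases Ordinal.zero_or_succ_or_isSuccLimit ζ with rfl | ⟨a, rfl⟩ | hl
  · rw [cbIter_zero]
  · rw [cbIter_succ]
    exact fun x hx => IH a (Order.lt_succ a) hx.1
  · rw [cbIter_limit _ hl]
    intro x hx
    have := Set.mem_iInter₂.mp hx 0 hl.pos
    exact IH 0 hl.pos this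

theorem cbIter_anti {α : Type*} [TopologicalSpace α] (K : Set α) (ζ' : Ordinal) :
    ∀ ζ ≤ ζ', cbIter K ζ' ⊆ cbIter K ζ := by
  induction ζ' using Ordinal.induction with
  | _ ζ' IH =>
  intro ζ hle
  rcases eq_or_lt_of_le hle with rfl | hlt
  · exact subset_refl _
  rcases Ordinal.zero_or_succ_or_isSuccLimit ζ' with rfl | ⟨a, rfl⟩ | hl
  · exact absurd hlt (not_lt_zero' (a := ζ))
  · rw [cbIter_succ]
    exact fun x hx => IH a (Order.lt_succ a) ζ (Order.lt_succ_iff.mp hlt) hx.1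
  · rw [cbIter_limit _ hl]
    exact fun x hx => Set.mem_iInter₂.mp hx ζ hlt

theorem toCantor_mem_cbIter {A : Set (Finset ℕ)} (hA : Hereditary A) (hS : Spreading A)
    (ζ : Ordinal) : ∀ F, big A ζ F → toCantor F ∈ cbIter (toCantor '' A) ζ := by
  induction ζ using Ordinal.induction with
  | _ ζ IH =>
  intro F hF
  rcases Ordinal.zero_or_succ_or_isSuccLimit ζ with rfl | ⟨a, rfl⟩ | hl
  · rw [cbIter_zero]
    rw [big_zero] at hF
    exact Set.mem_image_of_mem _ hF
  · rw [cbIter_succ]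
    have hFa : big A a F := big_mono hA _ a (Order.le_succ a) F hF
    refine ⟨IH a (Order.lt_succ a) F hFa, ?_⟩
    have hch : ∀ k : ℕ, ∃ m, k < m ∧ (∀ i ∈ F, i < m) ∧ big A a (insert m F) :=
      fun k => big_succ_large hA hS hF k
    choose s hs1 hs2 hs3 using hch
    have hmem : ∀ k, toCantor (insert (s k) F) ∈ cbIter (toCantor '' A) a :=
      fun k => IH a (Order.lt_succ a) _ (hs3 k)
    have hnotmem : ∀ k, s k ∉ F := fun k hk => lt_irrefl _ (hs2 k _ hk)
    have hne : ∀ k, toCantor (insert (s k) F) ≠ toCantor F := by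
      intro k h
      have := congrFun h (s k)
      simp only [toCantor, decide_eq_decide] at this
      exact hnotmem k (this.mp (Finset.mem_insert_self _ _))
    have htt : Filter.Tendsto (fun k => toCantor (insert (s k) F)) Filter.atTop
        (nhds (toCantor F)) := by
      rw [tendsto_pi_nhds]
      intro i
      apply Filter.Tendsto.congr' ?_ (tendsto_const_nhds (x := toCantor F i))
      filter_upwards [Filter.eventually_ge_atTop (i + 1)] with k hk
      have hik : i ≠ s k := by have := hs1 k; omega
      simp only [toCantor, Finset.mem_insert, decide_eq_decide]
      tauto
    exact mem_closure_of_tendsto htt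
      (Filter.Eventually.of_forall (fun k => ⟨hmem k, fun h => hne k h⟩))
  · rw [cbIter_limit _ hl]
    rw [big_limit _ hl] at hF
    exact Set.mem_iInter₂.mpr (fun η hη => IH η hη F (hF.2 η hη))

theorem exists_small_rank {A : Set (Finset ℕ)} (hA : Hereditary A) (hS : Spreading A)
    {Λ : Ordinal} (hΛ : Order.IsSuccLimit Λ) (hcb : cbIter (toCantor '' A) Λ = ∅) :
    ∃ ρ < Λ, ¬ big A ρ ∅ := by
  by_contra h
  push_neg at h
  have h0 : ∅ ∈ A := big_mem (h 0 hΛ.pos)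
  have hbig : big A Λ ∅ := by rw [big_limit _ hΛ]; exact ⟨h0, h⟩
  have := toCantor_mem_cbIter hA hS Λ ∅ hbig
  rw [hcb] at this
  exact this

/-! upper bridge via the potential function `psi` -/

noncomputable def psi (A : Set (Finset ℕ)) (F : Finset ℕ) : Ordinal.{u} := sInf {ζ : Ordinal.{u} | ¬ big A ζ F}

theorem not_big_any {A : Set (Finset ℕ)} (hA : Hereditary A) {ι : Ordinal.{u}}
    (h : ¬ big A ι ∅) (F : Finset ℕ) : ¬ big A ι F := fun hF =>
  h (big_mono hA _ ι (le_self_add) ∅ (big_to_empty hA F.card F rfl ι hF))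

theorem psi_le {A : Set (Finset ℕ)} (hA : Hereditary A) {ι : Ordinal.{u}}
    (h : ¬ big A ι ∅) (F : Finset ℕ) : psi A F ≤ ι := csInf_le' (not_big_any hA h F)

theorem psi_not_big {A : Set (Finset ℕ)} (hA : Hereditary A) {ι : Ordinal.{u}}
    (h : ¬ big A ι ∅) (F : Finset ℕ) : ¬ big A (psi.{u} A F) F :=
  csInf_mem (s := {ζ | ¬ big A ζ F}) ⟨ι, not_big_any hA h F⟩

theorem psi_big {A : Set (Finset ℕ)} {F : Finset ℕ} {ζ : Ordinal.{u}} (h : ζ < psi.{u} A F) :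
    big A ζ F := by
  by_contra hc
  exact absurd (csInf_le' (s := {ζ | ¬ big A ζ F}) hc) (not_le_of_gt h)

theorem psi_lt_insert {A : Set (Finset ℕ)} (hA : Hereditary A) {ι : Ordinal.{u}}
    (hnb : ¬ big A ι ∅) {F : Finset ℕ} {m : ℕ} (hmF : ∀ i ∈ F, i < m)
    (hmem : insert m F ∈ A) : psi.{u} A (insert m F) < psi.{u} A F := by
  have hFA : F ∈ A := hA (Finset.subset_insert m F) hmem
  have h1 : ∀ ζ, big A ζ (insert m F) → big A (Order.succ ζ) F := by
    intro ζ h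
    simp only [big_succ]
    exact ⟨hFA, m, hmF, h⟩
  rcases Ordinal.zero_or_succ_or_isSuccLimit (psi A (insert m F)) with h0 | ⟨a, ha⟩ | hl
  · exfalso
    have := psi_not_big hA hnb (insert m F)
    rw [h0, big_zero] at this
    exact this hmem
  · have hba : big A a (insert m F) := psi_big (ha ▸ Order.lt_succ a)
    have hsb : big A (Order.succ a) F := h1 a hba
    have hle : psi A (insert m F) ≤ psi A F := by
      rw [← ha]
      by_contra hc
      push_neg at hc
      exact psi_not_big hA hnb F (big_mono hA _ _ hc.le F hsb)
    rcases eq_or_lt_of_le hle with heq | hlt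
    · exfalso
      apply psi_not_big hA hnb F
      rw [← heq, ← ha]
      exact hsb
    · exact hlt
  · exfalso
    apply psi_not_big hA hnb (insert m F)
    rw [big_limit _ hl]
    exact ⟨hmem, fun η hη => psi_big hη⟩

theorem psi_lt_ext {A : Set (Finset ℕ)} (hA : Hereditary A) {ι : Ordinal.{u}}
    (hnb : ¬ big A ι ∅) : ∀ (n : ℕ) (F F' : Finset ℕ), (F' \ F).card = n → F ⊆ F' → F' ∈ A →
    (∀ i ∈ F, ∀ j ∈ F' \ F, i < j) → F ≠ F' → psi.{u} A F' < psi.{u} A F := by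
  intro n
  induction n with
  | zero =>
    intro F F' hcard hsub _ _ hne
    exfalso
    rw [Finset.card_eq_zero, Finset.sdiff_eq_empty_iff_subset] at hcard
    exact hne (Finset.Subset.antisymm hsub hcard)
  | succ k IH =>
    intro F F' hcard hsub hF'A hlt hne
    have hdne : (F' \ F).Nonempty := by rw [← Finset.card_pos, hcard]; omega
    set b := (F' \ F).max' hdne with hb
    have hbmem : b ∈ F' \ F := (F' \ F).max'_mem hdne
    have hbF' : b ∈ F' := (Finset.mem_sdiff.mp hbmem).1
    have hbF : b ∉ F := (Finset.mem_sdiff.mp hbmem).2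
    set F'' := F'.erase b with hF''
    have hsub2 : F ⊆ F'' := fun i hi =>
      Finset.mem_erase.mpr ⟨fun h => hbF (h ▸ hi), hsub hi⟩
    have hF''A : F'' ∈ A := hA (Finset.erase_subset b F') hF'A
    have hins : insert b F'' = F' := Finset.insert_erase hbF'
    have hstep : psi A F' < psi A F'' := by
      have hmF : ∀ i ∈ F'', i < b := by
        intro i hi
        have hiF' : i ∈ F' := Finset.mem_of_mem_erase hi
        have hib : i ≠ b := Finset.ne_of_mem_erase hi
        by_cases hiF : i ∈ F
        · exact hlt i hiF b hbmem
        · have hisd : i ∈ F' \ F := Finset.mem_sdiff.mpr ⟨hiF', hiF⟩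
          exact lt_of_le_of_ne ((F' \ F).le_max' i hisd) hib
      have h2 := psi_lt_insert hA hnb hmF (hins ▸ hF'A)
      rwa [hins] at h2
    by_cases hFF : F = F''
    · rw [← hFF] at hstep; exact hstep
    · have hcard2 : (F'' \ F).card = k := by
        have hEq : F'' \ F = (F' \ F).erase b := by
          ext i
          simp only [hF'', Finset.mem_sdiff, Finset.mem_erase]
          tauto
        rw [hEq, Finset.card_erase_of_mem hbmem, hcard]
        omega
      have hlt2 : ∀ i ∈ F, ∀ j ∈ F'' \ F, i < j := by
        intro i hi j hj
        rcases Finset.mem_sdiff.mp hj with ⟨hj1, hj2⟩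
        exact hlt i hi j (Finset.mem_sdiff.mpr ⟨Finset.mem_of_mem_erase hj1, hj2⟩)
      exact hstep.trans (IH F F'' hcard2 hsub2 hF''A hlt2 hFF)

theorem cbIter_empty_of_not_big {A : Set (Finset ℕ)} (hA : Hereditary A) {ι : Ordinal.{u}}
    (hnb : ¬ big A ι ∅) :
    cbIter (toCantor '' A) (Order.succ ι) = ∅ := by
  have key : ∀ μ F, F ∈ A → psi A F = μ →
      toCantor F ∉ cbIter (toCantor '' A) (Order.succ μ) := by
    intro μ
    induction μ using Ordinal.induction with
    | _ μ IHμ =>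
    intro F hFA hpsi hmem
    rw [cbIter_succ] at hmem
    obtain ⟨hmem1, hcl⟩ := hmem
    set U := {y : ℕ → Bool | ∀ i ∈ Finset.range (F.sup id + 1), y i = toCantor F i} with hU
    have hUopen : IsOpen U := by
      have hUeq : U = ⋂ i ∈ Finset.range (F.sup id + 1), {y : ℕ → Bool | y i = toCantor F i} := by
        ext y; simp [hU]
      rw [hUeq]
      apply isOpen_biInter_finset
      intro i _
      have hpre : {y : ℕ → Bool | y i = toCantor F i} =
          (fun y : ℕ → Bool => y i) ⁻¹' {toCantor F i} := rfl
      rw [hpre]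
      exact IsOpen.preimage (continuous_apply i) (isOpen_discrete _)
    have hxU : toCantor F ∈ U := fun i _ => rfl
    rcases mem_closure_iff.mp hcl U hUopen hxU with ⟨y, hyU, hy1, hy2⟩
    have hyK : y ∈ toCantor '' A := cbIter_subset _ _ hy1
    obtain ⟨F', hF'A, rfl⟩ := hyK
    have hne : F ≠ F' := by
      intro h
      apply hy2
      rw [h]
      rfl
    have hagree : ∀ i, i ≤ F.sup id → ((i ∈ F') ↔ (i ∈ F)) := by
      intro i hi
      have hir : i ∈ Finset.range (F.sup id + 1) := Finset.mem_range.mpr (by omega)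
      have h3 := hyU i hir
      simpa only [toCantor, decide_eq_decide] using h3
    have hsub : F ⊆ F' := by
      intro i hi
      exact (hagree i (Finset.le_sup (f := id) hi)).mpr hi
    have hgt : ∀ i ∈ F, ∀ j ∈ F' \ F, i < j := by
      intro i hi j hj
      rcases Finset.mem_sdiff.mp hj with ⟨hj1, hj2⟩
      by_contra hij
      push_neg at hij
      have hjs : j ≤ F.sup id := le_trans hij (Finset.le_sup (f := id) hi)
      exact hj2 ((hagree j hjs).mp hj1)
    have hlt : psi A F' < μ := hpsi ▸ psi_lt_ext hA hnb (F' \ F).card F F' rfl hsub hF'A hgt hne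
    have hnotin : toCantor F' ∉ cbIter (toCantor '' A) (Order.succ (psi A F')) :=
      IHμ (psi A F') hlt F' hF'A rfl
    exact hnotin (cbIter_anti _ μ _ (Order.succ_le_of_lt hlt) hy1)
  ext y
  simp only [Set.mem_empty_iff_false, iff_false]
  intro hy
  have hyK : y ∈ toCantor '' A := cbIter_subset _ _ hy
  obtain ⟨F, hFA, rfl⟩ := hyK
  apply key (psi A F) F hFA rfl
  exact cbIter_anti _ _ _ (Order.succ_le_succ (psi_le hA hnb F)) hy

/-! ### Part 4: finitely supported vectors -/

def wsum (x : ℕ →₀ ℝ) (E : Finset ℕ) : ℝ := ∑ i ∈ E, x i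

def tot (x : ℕ →₀ ℝ) : ℝ := ∑ i ∈ x.support, x i

theorem wsum_nonneg {x : ℕ →₀ ℝ} (hx : ∀ i, 0 ≤ x i) (E : Finset ℕ) : 0 ≤ wsum x E :=
  Finset.sum_nonneg (fun i _ => hx i)

theorem wsum_eq_of_subset {x : ℕ →₀ ℝ} {S : Finset ℕ} (hx : x.support ⊆ S) (E : Finset ℕ) :
    wsum x E = wsum x (E ∩ S) := by
  refine (Finset.sum_subset (Finset.inter_subset_left) ?_).symm
  intro i hi hni
  by_contra hne
  exact hni (Finset.mem_inter.mpr ⟨hi, hx (Finsupp.mem_support_iff.mpr hne)⟩)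

theorem wsum_eq_tot_of_subset {x : ℕ →₀ ℝ} {S : Finset ℕ} (hx : x.support ⊆ S) :
    wsum x S = tot x := by
  refine (Finset.sum_subset hx ?_).symm
  intro i _ hni
  exact Finsupp.notMem_support_iff.mp hni

theorem wsum_le_tot {x : ℕ →₀ ℝ} (hx : ∀ i, 0 ≤ x i) (E : Finset ℕ) : wsum x E ≤ tot x := by
  rw [wsum_eq_of_subset (subset_refl x.support) E]
  unfold tot
  apply Finset.sum_le_sum_of_subset_of_nonneg Finset.inter_subset_right
  intro i _ _
  exact hx i

theorem wsum_add (x y : ℕ →₀ ℝ) (E : Finset ℕ) : wsum (x + y) E = wsum x E + wsum y E := by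
  unfold wsum
  simp only [Finsupp.add_apply]
  exact Finset.sum_add_distrib

theorem tot_add {x y : ℕ →₀ ℝ} : tot (x + y) = tot x + tot y := by
  classical
  have hsub : (x + y).support ⊆ x.support ∪ y.support := Finsupp.support_add
  have h1 : tot (x + y) = wsum (x + y) (x.support ∪ y.support) :=
    (wsum_eq_tot_of_subset hsub).symm
  rw [h1, wsum_add]
  congr 1
  · exact wsum_eq_tot_of_subset Finset.subset_union_left
  · exact wsum_eq_tot_of_subset Finset.subset_union_right

theorem wsum_smul (c : ℝ) (x : ℕ →₀ ℝ) (E : Finset ℕ) : wsum (c • x) E = c * wsum x E := by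
  unfold wsum
  simp only [Finsupp.smul_apply, _root_.smul_eq_mul]
  exact (Finset.mul_sum _ _ _).symm

theorem tot_smul (c : ℝ) (x : ℕ →₀ ℝ) : tot (c • x) = c * tot x := by
  have hsub : (c • x).support ⊆ x.support := Finsupp.support_smul
  have h1 : tot (c • x) = wsum (c • x) x.support := (wsum_eq_tot_of_subset hsub).symm
  rw [h1, wsum_smul, wsum_eq_tot_of_subset (subset_refl _)]

noncomputable def unifOn (S : Finset ℕ) (c : ℝ) : ℕ →₀ ℝ :=
  Finsupp.indicator S (fun _ _ => c)

theorem unifOn_support {S : Finset ℕ} {c : ℝ} : (unifOn S c).support ⊆ S := by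
  intro i hi
  have := Finsupp.support_indicator_subset (s := S) (f := fun _ _ => c)
  exact_mod_cast this hi

theorem unifOn_apply_mem {S : Finset ℕ} {c : ℝ} {i : ℕ} (hi : i ∈ S) : unifOn S c i = c :=
  Finsupp.indicator_of_mem hi _

theorem unifOn_nonneg {S : Finset ℕ} {c : ℝ} (hc : 0 ≤ c) (i : ℕ) : 0 ≤ unifOn S c i := by
  classical
  rw [unifOn, Finsupp.indicator_apply]
  split <;> simp [hc]

theorem wsum_unifOn (S : Finset ℕ) (c : ℝ) (E : Finset ℕ) :
    wsum (unifOn S c) E = c * (E ∩ S).card := by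
  classical
  rw [wsum_eq_of_subset unifOn_support E]
  unfold wsum
  rw [Finset.sum_congr rfl (fun i hi => unifOn_apply_mem (Finset.mem_inter.mp hi).2)]
  rw [Finset.sum_const, _root_.nsmul_eq_mul, mul_comm]

theorem tot_unifOn (S : Finset ℕ) (c : ℝ) : tot (unifOn S c) = c * S.card := by
  have h := wsum_unifOn S c S
  rw [Finset.inter_self] at h
  rw [← wsum_eq_tot_of_subset unifOn_support]
  exact h

/-! ### Part 5: the main combinatorial extraction -/

/-- The main extraction statement: given finitely many hereditary families of rank `< ω^μ`,
for some budget `ι < ω^μ`, inside any hereditary family `𝓑` of `big`-rank at least `γ + ι`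
at `p` one can find an extension `F` (still of rank `γ`) carrying a convex vector all of
whose sums along members of the given families are `< δ`. -/
def SMstmt (μ : Ordinal.{u}) : Prop :=
  ∀ 𝒞 : Finset (Set (Finset ℕ)),
    (∀ A ∈ 𝒞, Hereditary A ∧ ∃ ρ < Ordinal.omega0.{u} ^ μ, ¬ big A ρ ∅) →
    ∀ δ : ℝ, 0 < δ →
    ∃ ι < Ordinal.omega0.{u} ^ μ, ∀ 𝓑 : Set (Finset ℕ), Hereditary 𝓑 →
      ∀ (γ : Ordinal.{u}) (p : Finset ℕ), big 𝓑 (γ + ι) p →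
      ∃ (F : Finset ℕ) (x : ℕ →₀ ℝ), p ⊆ F ∧ big 𝓑 γ F ∧
        (∀ b ∈ p, ∀ a ∈ F \ p, b < a) ∧
        x.support ⊆ F \ p ∧ (∀ i, 0 ≤ x i) ∧ tot x = 1 ∧
        ∀ A ∈ 𝒞, ∀ E ∈ A, wsum x E < δ

theorem big_extend_chain {𝓑 : Set (Finset ℕ)} :
    ∀ (L : ℕ) (γ : Ordinal.{u}) (p : Finset ℕ), big 𝓑 (γ + (L : Ordinal)) p →
    ∃ F, p ⊆ F ∧ big 𝓑 γ F ∧ (∀ b ∈ p, ∀ a ∈ F \ p, b < a) ∧ (F \ p).card = L := by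
  intro L
  induction L with
  | zero =>
    intro γ p h
    exact ⟨p, subset_refl p, by simpa using h, by simp, by simp⟩
  | succ k IH =>
    intro γ p h
    have hcast : γ + ((k + 1 : ℕ) : Ordinal) = Order.succ (γ + (k : ℕ)) := by
      rw [Nat.cast_succ, ← add_assoc, Ordinal.add_one_eq_succ]
    rw [hcast] at h
    simp only [big_succ] at h
    obtain ⟨hpB, m, hm, hbig⟩ := h
    obtain ⟨F, hsub, hbigF, hsep, hcard⟩ := IH γ (insert m p) hbig
    have hmp : m ∉ p := fun hmem => lt_irrefl m (hm m hmem)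
    have hmF : m ∈ F := hsub (Finset.mem_insert_self m p)
    refine ⟨F, (Finset.subset_insert m p).trans hsub, hbigF, ?_, ?_⟩
    · intro b hb a ha
      rcases Finset.mem_sdiff.mp ha with ⟨haF, hap⟩
      by_cases ham : a = m
      · exact ham ▸ hm b hb
      · exact hsep b (Finset.mem_insert_of_mem hb) a
          (Finset.mem_sdiff.mpr ⟨haF, fun hmem => by
            rcases Finset.mem_insert.mp hmem with h' | h'
            · exact ham h'
            · exact hap h'⟩)
    · have heq : F \ p = insert m (F \ insert m p) := by
        ext i
        simp only [Finset.mem_sdiff, Finset.mem_insert]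
        constructor
        · rintro ⟨hiF, hip⟩
          by_cases him : i = m
          · exact Or.inl him
          · exact Or.inr ⟨hiF, fun h => (h.elim him hip)⟩
        · rintro (rfl | ⟨hiF, hip⟩)
          · exact ⟨hmF, hmp⟩
          · exact ⟨hiF, fun h => hip (Or.inr h)⟩
      rw [heq, Finset.card_insert_of_notMem (fun hmem =>
        (Finset.mem_sdiff.mp hmem).2 (Finset.mem_insert_self m p)), hcard]

open Classical in
noncomputable def WO (A : Set (Finset ℕ)) (τ : Ordinal.{u}) (q : Finset ℕ) : ℝ :=
  if big A τ q then (1 : ℝ) else 0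

theorem WO_nonneg (A : Set (Finset ℕ)) (τ : Ordinal.{u}) (q : Finset ℕ) : 0 ≤ WO A τ q := by
  unfold WO
  split <;> norm_num

theorem WO_le_one (A : Set (Finset ℕ)) (τ : Ordinal.{u}) (q : Finset ℕ) : WO A τ q ≤ 1 := by
  unfold WO
  split <;> norm_num

theorem WO_of_big {A : Set (Finset ℕ)} {τ : Ordinal.{u}} {q : Finset ℕ} (h : big A τ q) :
    WO A τ q = 1 := by
  unfold WO
  rw [if_pos h]

theorem WO_of_not_big {A : Set (Finset ℕ)} {τ : Ordinal.{u}} {q : Finset ℕ} (h : ¬ big A τ q) :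
    WO A τ q = 0 := by
  unfold WO
  rw [if_neg h]

open Classical in
noncomputable def Dfam (𝒞 : Finset (Set (Finset ℕ))) (τ : Ordinal.{u}) (R : Finset ℕ) :
    Finset (Set (Finset ℕ)) :=
  ((𝒞 ×ˢ R.powerset).image (fun Aq => loc (bandK Aq.1 τ) Aq.2)) ∪
  (((𝒞 ×ˢ R.powerset).filter (fun Aq => ¬ big Aq.1 τ Aq.2)).image (fun Aq => loc Aq.1 Aq.2))

theorem Dfam_mem_K {𝒞 : Finset (Set (Finset ℕ))} {τ : Ordinal.{u}} {R : Finset ℕ}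
    {A : Set (Finset ℕ)} {q : Finset ℕ} (hA : A ∈ 𝒞) (hq : q ⊆ R) :
    loc (bandK A τ) q ∈ Dfam 𝒞 τ R := by
  classical
  apply Finset.mem_union_left
  apply Finset.mem_image.mpr
  exact ⟨(A, q), Finset.mem_product.mpr ⟨hA, Finset.mem_powerset.mpr hq⟩, rfl⟩

theorem Dfam_mem_loc {𝒞 : Finset (Set (Finset ℕ))} {τ : Ordinal.{u}} {R : Finset ℕ}
    {A : Set (Finset ℕ)} {q : Finset ℕ} (hA : A ∈ 𝒞) (hq : q ⊆ R) (hnb : ¬ big A τ q) :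
    loc A q ∈ Dfam 𝒞 τ R := by
  classical
  apply Finset.mem_union_right
  apply Finset.mem_image.mpr
  exact ⟨(A, q), Finset.mem_filter.mpr ⟨Finset.mem_product.mpr
    ⟨hA, Finset.mem_powerset.mpr hq⟩, hnb⟩, rfl⟩

theorem Dfam_cond {𝒞 : Finset (Set (Finset ℕ))} {n : ℕ} (hn : 1 ≤ n) {ν : Ordinal.{u}}
    (h𝒞 : ∀ A ∈ 𝒞, Hereditary A ∧ ¬ big A (Ordinal.omega0 ^ ν * (n + 1 : ℕ)) ∅)
    (R : Finset ℕ) :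
    ∀ B ∈ Dfam 𝒞 (Ordinal.omega0 ^ ν * (n : ℕ)) R,
      Hereditary B ∧ ¬ big B (Ordinal.omega0 ^ ν * (n : ℕ)) ∅ := by
  classical
  intro B hB
  set τ := Ordinal.omega0.{u} ^ ν * (n : ℕ) with hτ
  rcases Finset.mem_union.mp hB with hB | hB
  · obtain ⟨⟨A, q⟩, hAq, rfl⟩ := Finset.mem_image.mp hB
    obtain ⟨hA, _⟩ := Finset.mem_product.mp hAq
    obtain ⟨herA, hbigA⟩ := h𝒞 A hA
    refine ⟨loc_hereditary (bandK_hereditary herA τ) q, ?_⟩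
    intro hb
    have h1 : big (bandK A τ) τ q := by
      have := big_loc q τ ∅ hb
      rwa [Finset.union_empty] at this
    have h2 : big A (τ + τ) q := big_bandK herA τ τ q h1
    have h3 : big A (τ + τ + q.card) ∅ := big_to_empty herA q.card q rfl _ h2
    apply hbigA
    apply big_mono herA _ _ ?_ _ h3
    calc Ordinal.omega0 ^ ν * ((n : ℕ) + 1 : ℕ) = τ + Ordinal.omega0 ^ ν := by
          rw [hτ]; push_cast; rw [mul_add, mul_one]
      _ ≤ τ + τ := by
          apply add_le_add_right
          rw [hτ]
          calc Ordinal.omega0 ^ ν = Ordinal.omega0 ^ ν * 1 := (mul_one _).symm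
            _ ≤ Ordinal.omega0 ^ ν * (n : ℕ) := by
                apply mul_le_mul_right
                have h1n : ((1:ℕ) : Ordinal.{u}) ≤ ((n:ℕ) : Ordinal.{u}) := by exact_mod_cast hn
                simpa using h1n
      _ ≤ τ + τ + q.card := le_self_add
  · obtain ⟨⟨A, q⟩, hAq, rfl⟩ := Finset.mem_image.mp hB
    obtain ⟨hAq', hfilt⟩ := Finset.mem_filter.mp hAq
    obtain ⟨hA, _⟩ := Finset.mem_product.mp hAq'
    obtain ⟨herA, _⟩ := h𝒞 A hA
    refine ⟨loc_hereditary herA q, ?_⟩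
    intro hb
    have h1 : big A τ q := by
      have := big_loc q τ ∅ hb
      rwa [Finset.union_empty] at this
    exact hfilt h1

theorem SM_base : SMstmt.{u} 1 := by
  intro 𝒞 h𝒞 δ hδ
  have hsz : ∀ A ∈ 𝒞, ∃ k : ℕ, ∀ E ∈ A, E.card < k := by
    intro A hA
    obtain ⟨herA, ρ, hρω, hρ⟩ := h𝒞 A hA
    rw [Ordinal.opow_one] at hρω
    obtain ⟨k, rfl⟩ := Ordinal.lt_omega0.mp hρω
    refine ⟨k, fun E hE => ?_⟩
    by_contra hc
    push_neg at hc
    apply hρ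
    have h0 : big A 0 E := by rw [big_zero]; exact hE
    have h1 := big_to_empty herA E.card E rfl 0 h0
    rw [zero_add] at h1
    have hle : ((k:ℕ) : Ordinal.{u}) ≤ ((E.card : ℕ) : Ordinal.{u}) := by exact_mod_cast hc
    exact big_mono herA _ _ hle ∅ h1
  choose! k hk using hsz
  classical
  set K : ℕ := 𝒞.sup k with hK
  obtain ⟨L0, hL0⟩ := exists_nat_gt ((K : ℝ) / δ)
  set L := L0 + 1 with hL
  have hKL : (K : ℝ) / δ < L := by
    have : (L0 : ℝ) < L := by rw [hL]; push_cast; linarith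
    linarith
  have hKLδ : (K : ℝ) < L * δ := (div_lt_iff₀ hδ).mp hKL
  refine ⟨(L : Ordinal), ?_, ?_⟩
  · rw [Ordinal.opow_one]; exact Ordinal.nat_lt_omega0 L
  intro 𝓑 h𝓑 γ p hbig
  obtain ⟨F, hsub, hbigF, hsep, hcard⟩ := big_extend_chain L γ p hbig
  set x := unifOn (F \ p) ((L : ℝ)⁻¹) with hx
  have hLpos : (0:ℝ) < L := by positivity
  refine ⟨F, x, hsub, hbigF, hsep, unifOn_support, unifOn_nonneg (by positivity), ?_, ?_⟩
  · rw [hx, tot_unifOn, hcard]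
    field_simp
  · intro A hA E hE
    rw [hx, wsum_unifOn]
    have h1 : ((E ∩ (F \ p)).card : ℝ) ≤ (K:ℝ) := by
      have h2 : (E ∩ (F \ p)).card ≤ E.card := Finset.card_le_card Finset.inter_subset_left
      have h3 : E.card < k A := hk A hA E hE
      have h4 : k A ≤ K := Finset.le_sup hA
      exact_mod_cast by omega
    calc (L:ℝ)⁻¹ * (E ∩ (F \ p)).card ≤ (L:ℝ)⁻¹ * K :=
        mul_le_mul_of_nonneg_left h1 (by positivity)
      _ < δ := by
        rw [inv_mul_lt_iff₀ hLpos]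
        linarith

theorem Tlemma (ν : Ordinal.{u}) (hν : 1 ≤ ν) (SMν : SMstmt.{u} ν) :
    ∀ n : ℕ, 1 ≤ n → ∀ δ : ℝ, 0 < δ → ∃ g : ℕ, 1 ≤ g ∧
    ∀ 𝒞 : Finset (Set (Finset ℕ)),
      (∀ A ∈ 𝒞, Hereditary A ∧ ¬ big A (Ordinal.omega0.{u} ^ ν * (n : ℕ)) ∅) →
    ∀ 𝓑 : Set (Finset ℕ), Hereditary 𝓑 → ∀ (γ : Ordinal.{u}) (p : Finset ℕ),
      big 𝓑 (γ + Ordinal.omega0.{u} ^ ν * (g : ℕ)) p →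
    ∃ (F : Finset ℕ) (x : ℕ →₀ ℝ), p ⊆ F ∧ big 𝓑 γ F ∧
      (∀ b ∈ p, ∀ a ∈ F \ p, b < a) ∧
      x.support ⊆ F \ p ∧ (∀ i, 0 ≤ x i) ∧ tot x = 1 ∧
      ∀ A ∈ 𝒞, ∀ E ∈ A, wsum x E < δ := by
  intro n
  induction n with
  | zero => omega
  | succ m IHm =>
    intro _ δ hδ
    by_cases hm : m = 0
    · -- base : n = 1, via the transfinite induction hypothesis `SMν`
      subst hm
      refine ⟨1, le_refl 1, ?_⟩
      intro 𝒞 h𝒞 𝓑 h𝓑 γ p hbig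
      have h𝒞' : ∀ A ∈ 𝒞, Hereditary A ∧ ∃ ρ < Ordinal.omega0.{u} ^ ν, ¬ big A ρ ∅ := by
        intro A hA
        obtain ⟨herA, hnb⟩ := h𝒞 A hA
        refine ⟨herA, ?_⟩
        rw [show (((0:ℕ)+1 : ℕ) : Ordinal.{u}) = 1 by norm_cast, mul_one] at hnb
        by_cases hemp : ∅ ∈ A
        · have hlim : Order.IsSuccLimit (Ordinal.omega0.{u} ^ ν) :=
            Ordinal.isSuccLimit_opow_left Ordinal.isSuccLimit_omega0
              (by intro h0; rw [h0] at hν; exact absurd hν (by norm_num))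
          by_contra hc
          push_neg at hc
          apply hnb
          rw [big_limit _ hlim]
          exact ⟨hemp, hc⟩
        · refine ⟨0, Ordinal.opow_pos ν Ordinal.omega0_pos, ?_⟩
          rw [big_zero]
          exact hemp
      obtain ⟨ι, hι, hext⟩ := SMν 𝒞 h𝒞' δ hδ
      apply hext 𝓑 h𝓑 γ p
      apply big_mono h𝓑 _ _ ?_ _ hbig
      apply add_le_add_right
      calc ι ≤ Ordinal.omega0.{u} ^ ν := hι.le
        _ = Ordinal.omega0.{u} ^ ν * ((1:ℕ) : Ordinal) := by rw [Nat.cast_one, mul_one]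
        _ = Ordinal.omega0.{u} ^ ν * (((0:ℕ)+1 : ℕ) : Ordinal) := by norm_num
    · -- inductive step : n = m + 1 with m ≥ 1
      have hm1 : 1 ≤ m := by omega
      obtain ⟨g0, hg0, hTn⟩ := IHm hm1 (δ/2) (by linarith)
      classical
      set M := Nat.ceil (4/δ) + 1 with hM
      have hMpos : 0 < M := Nat.succ_pos _
      have hMR : (0:ℝ) < (M:ℝ) := by positivity
      have hMgt : 4/δ < (M:ℝ) := by
        calc 4/δ ≤ (Nat.ceil (4/δ) : ℝ) := Nat.le_ceil _
          _ < (M:ℝ) := by rw [hM]; push_cast; linarith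
      refine ⟨g0 * M, Nat.mul_pos hg0 hMpos, ?_⟩
      intro 𝒞 h𝒞 𝓑 h𝓑 γ p hbig
      set τ := Ordinal.omega0.{u} ^ ν * (m : ℕ) with hτ
      set c := Ordinal.omega0.{u} ^ ν * (g0 : ℕ) with hc
      have hDcond : ∀ R : Finset ℕ, ∀ B ∈ Dfam 𝒞 τ R, Hereditary B ∧ ¬ big B τ ∅ := by
        intro R
        exact Dfam_cond hm1 h𝒞 R
      -- the inner block-construction
      have aux : ∀ k : ℕ, ∀ (γ' : Ordinal.{u}) (p' R : Finset ℕ), R ⊆ p' →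
          big 𝓑 (γ' + c * (k : ℕ)) p' →
          ∃ (F : Finset ℕ) (v : ℕ →₀ ℝ), p' ⊆ F ∧ big 𝓑 γ' F ∧
            (∀ b ∈ p', ∀ a ∈ F \ p', b < a) ∧
            v.support ⊆ F \ p' ∧ (∀ i, 0 ≤ v i) ∧ tot v = (k : ℝ) ∧
            ∀ A ∈ 𝒞, ∀ E ∈ A, E ⊆ R ∪ (F \ p') →
              wsum v E ≤ (k : ℝ) * (δ/2) + WO A τ (E ∩ R) := by
        intro k
        induction k with
        | zero =>
          intro γ' p' R hR hbig'
          refine ⟨p', 0, subset_refl _, by simpa using hbig', by simp, by simp, by simp,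
            by simp [tot], ?_⟩
          intro A hA E hE hEsub
          have h0 : wsum 0 E = 0 := by simp [wsum]
          rw [h0]
          have := WO_nonneg A τ (E ∩ R)
          simp only [Nat.cast_zero, zero_mul, zero_add]
          exact this
        | succ j IHj =>
          intro γ' p' R hR hbig'
          have hsplit : γ' + c * ((j+1 : ℕ) : Ordinal) = (γ' + c * (j:ℕ)) + c := by
            rw [Nat.cast_succ, mul_add, mul_one, ← add_assoc]
          rw [hsplit] at hbig'
          obtain ⟨F₁, x₁, hsub₁, hbig₁, hsep₁, hsupp₁, hpos₁, htot₁, hgood₁⟩ :=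
            hTn (Dfam 𝒞 τ R) (hDcond R) 𝓑 h𝓑 (γ' + c * (j:ℕ)) p' hbig'
          obtain ⟨F, v', hsub₂, hbig₂, hsep₂, hsupp₂, hpos₂, htot₂, hest₂⟩ :=
            IHj γ' F₁ (R ∪ (F₁ \ p'))
              (Finset.union_subset (hR.trans hsub₁) Finset.sdiff_subset) hbig₁
          refine ⟨F, x₁ + v', hsub₁.trans hsub₂, hbig₂, ?_, ?_, ?_, ?_, ?_⟩
          · intro b hb a ha
            rcases Finset.mem_sdiff.mp ha with ⟨haF, hap⟩
            by_cases haF₁ : a ∈ F₁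
            · exact hsep₁ b hb a (Finset.mem_sdiff.mpr ⟨haF₁, hap⟩)
            · exact hsep₂ b (hsub₁ hb) a (Finset.mem_sdiff.mpr ⟨haF, haF₁⟩)
          · intro i hi
            have hi2 := Finsupp.support_add hi
            rcases Finset.mem_union.mp hi2 with hi₁ | hi₂
            · rcases Finset.mem_sdiff.mp (hsupp₁ hi₁) with ⟨hiF₁, hip⟩
              exact Finset.mem_sdiff.mpr ⟨hsub₂ hiF₁, hip⟩
            · rcases Finset.mem_sdiff.mp (hsupp₂ hi₂) with ⟨hiF, hiF₁⟩
              exact Finset.mem_sdiff.mpr ⟨hiF, fun hip => hiF₁ (hsub₁ hip)⟩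
          · exact fun i => add_nonneg (hpos₁ i) (hpos₂ i)
          · rw [tot_add, htot₁, htot₂]; push_cast; ring
          · intro A hA E hEA hEsub
            obtain ⟨herA, _⟩ := h𝒞 A hA
            set q := E ∩ R with hq
            set e₁ := E ∩ (F₁ \ p') with he₁
            have hq' : E ∩ (R ∪ (F₁ \ p')) = q ∪ e₁ := Finset.inter_union_distrib_left E R _
            have hEsub' : E ⊆ (R ∪ (F₁ \ p')) ∪ (F \ F₁) := by
              intro a ha
              rcases Finset.mem_union.mp (hEsub ha) with h | h
              · exact Finset.mem_union_left _ (Finset.mem_union_left _ h)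
              · rcases Finset.mem_sdiff.mp h with ⟨haF, hap⟩
                by_cases haF₁ : a ∈ F₁
                · exact Finset.mem_union_left _
                    (Finset.mem_union_right _ (Finset.mem_sdiff.mpr ⟨haF₁, hap⟩))
                · exact Finset.mem_union_right _ (Finset.mem_sdiff.mpr ⟨haF, haF₁⟩)
            have htail := hest₂ A hA E hEA hEsub'
            rw [hq'] at htail
            have hx₁E : wsum x₁ E = wsum x₁ e₁ := wsum_eq_of_subset hsupp₁ E
            have hsum : wsum (x₁ + v') E = wsum x₁ e₁ + wsum v' E := by
              rw [wsum_add, hx₁E]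
            have hqR : q ⊆ R := Finset.inter_subset_right
            have hqeE : q ∪ e₁ ⊆ E :=
              Finset.union_subset Finset.inter_subset_left Finset.inter_subset_left
            have hsep_qe : ∀ i ∈ q, ∀ j' ∈ e₁, i < j' := by
              intro i hi j' hj'
              exact hsep₁ i (hR (hqR hi)) j' (Finset.mem_inter.mp hj').2
            have hwx1 : wsum x₁ e₁ ≤ 1 := by
              have h5 := wsum_le_tot hpos₁ e₁
              rwa [htot₁] at h5
            rw [hsum]
            by_cases hbq : big A τ q
            · by_cases hbq' : big A τ (q ∪ e₁)
              · -- both prefixes in the upper band : covered by `loc (bandK A τ) q`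
                have hmem : e₁ ∈ loc (bandK A τ) q := ⟨hsep_qe, hbq'⟩
                have hsmall := hgood₁ _ (Dfam_mem_K hA hqR) e₁ hmem
                have hWO' : WO A τ (q ∪ e₁) ≤ WO A τ q := by
                  rw [WO_of_big hbq, WO_of_big hbq']
                push_cast
                linarith
              · -- the crossing block : write it off against the band indicator
                have hWO' : WO A τ (q ∪ e₁) = 0 := WO_of_not_big hbq'
                have hWOq : WO A τ q = 1 := WO_of_big hbq
                rw [hWOq]
                rw [hWO'] at htail
                push_cast
                linarith
            · -- the prefix is already low : covered by `loc A q`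
              have hbq'2 : ¬ big A τ (q ∪ e₁) := fun h =>
                hbq (big_subset herA τ q (q ∪ e₁) Finset.subset_union_left h)
              have hmem : e₁ ∈ loc A q := ⟨hsep_qe, herA hqeE hEA⟩
              have hsmall := hgood₁ _ (Dfam_mem_loc hA hqR hbq) e₁ hmem
              have hWO' : WO A τ (q ∪ e₁) = 0 := WO_of_not_big hbq'2
              have hWOq : WO A τ q = 0 := WO_of_not_big hbq
              rw [hWOq]
              rw [hWO'] at htail
              push_cast
              linarith
      -- assemble the `M` blocks
      have hbudget : γ + Ordinal.omega0.{u} ^ ν * ((g0 * M : ℕ) : Ordinal) = γ + c * (M : ℕ) := by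
        rw [hc, mul_assoc, Ordinal.natCast_mul]
      rw [hbudget] at hbig
      obtain ⟨F, v, hsub, hbigF, hsep, hsupp, hpos, htot, hest⟩ :=
        aux M γ p ∅ (Finset.empty_subset p) hbig
      set x := (M : ℝ)⁻¹ • v with hx
      have hsuppx : x.support ⊆ F \ p := fun i hi => hsupp (Finsupp.support_smul hi)
      refine ⟨F, x, hsub, hbigF, hsep, hsuppx, ?_, ?_, ?_⟩
      · intro i
        rw [hx, Finsupp.smul_apply, _root_.smul_eq_mul]
        exact mul_nonneg (by positivity) (hpos i)
      · rw [hx, tot_smul, htot]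
        field_simp
      · intro A hA E hEA
        obtain ⟨herA, _⟩ := h𝒞 A hA
        set E' := E ∩ (F \ p) with hE'
        have hE'A : E' ∈ A := herA Finset.inter_subset_left hEA
        have hE'sub : E' ⊆ ∅ ∪ (F \ p) := by
          rw [Finset.empty_union]
          exact Finset.inter_subset_right
        have h1 := hest A hA E' hE'A hE'sub
        have h2 : E' ∩ (∅ : Finset ℕ) = ∅ := Finset.inter_empty E'
        rw [h2] at h1
        have h3 : WO A τ ∅ ≤ 1 := WO_le_one A τ ∅
        have h4 : wsum x E = (M:ℝ)⁻¹ * wsum v E' := by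
          rw [hx, wsum_smul, wsum_eq_of_subset hsupp E]
        rw [h4]
        have h5 : wsum v E' ≤ (M:ℝ) * (δ/2) + 1 := by linarith
        calc (M:ℝ)⁻¹ * wsum v E' ≤ (M:ℝ)⁻¹ * ((M:ℝ) * (δ/2) + 1) := by
              apply mul_le_mul_of_nonneg_left h5 (by positivity)
          _ = δ/2 + (M:ℝ)⁻¹ := by field_simp
          _ < δ := by
              have h6 : (M:ℝ)⁻¹ < δ/4 := by
                rw [inv_lt_iff_one_lt_mul₀ hMR]
                rw [div_lt_iff₀ hδ] at hMgt
                nlinarith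
              linarith

theorem SM_all : ∀ μ : Ordinal.{u}, 1 ≤ μ → SMstmt.{u} μ := by
  intro μ
  induction μ using Ordinal.induction with
  | _ μ IH =>
  intro hμ
  rcases Ordinal.zero_or_succ_or_isSuccLimit μ with rfl | ⟨ν, rfl⟩ | hl
  · exfalso
    simp at hμ
  · by_cases hν : ν = 0
    · subst hν
      have h01 : Order.succ (0 : Ordinal.{u}) = 1 := by simp
      rw [h01]
      exact SM_base
    · have hν1 : 1 ≤ ν := Ordinal.one_le_iff_ne_zero.mpr hν
      have SMν : SMstmt ν := IH ν (Order.lt_succ ν) hν1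
      intro 𝒞 h𝒞 δ hδ
      have hn : ∀ A ∈ 𝒞, ∃ nA : ℕ, ¬ big A (Ordinal.omega0.{u} ^ ν * (nA : ℕ)) ∅ := by
        intro A hA
        obtain ⟨herA, ρ, hρ, hnb⟩ := h𝒞 A hA
        rw [Ordinal.opow_succ] at hρ
        obtain ⟨b, hb, hρb⟩ := (Ordinal.lt_mul_iff_of_isSuccLimit Ordinal.isSuccLimit_omega0).mp hρ
        obtain ⟨nA0, rfl⟩ := Ordinal.lt_omega0.mp hb
        exact ⟨nA0, fun hbg => hnb (big_mono herA _ _ hρb.le _ hbg)⟩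
      choose! nA hnA using hn
      classical
      set n := 𝒞.sup nA + 1 with hn'
      have h𝒞n : ∀ A ∈ 𝒞, Hereditary A ∧ ¬ big A (Ordinal.omega0.{u} ^ ν * (n : ℕ)) ∅ := by
        intro A hA
        obtain ⟨herA, _⟩ := h𝒞 A hA
        refine ⟨herA, fun hbg => hnA A hA ?_⟩
        apply big_mono herA _ _ ?_ _ hbg
        apply mul_le_mul_right
        have hle : nA A ≤ n := le_trans (Finset.le_sup hA) (by omega)
        exact_mod_cast hle
      obtain ⟨g, hg, hT⟩ := Tlemma ν hν1 SMν n (by omega) δ hδ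
      refine ⟨Ordinal.omega0.{u} ^ ν * (g : ℕ), ?_, ?_⟩
      · rw [Ordinal.opow_succ]
        exact (mul_lt_mul_iff_right₀ (Ordinal.opow_pos ν Ordinal.omega0_pos)).mpr
          (Ordinal.nat_lt_omega0 g)
      · intro 𝓑 h𝓑 γ p hbig
        exact hT 𝒞 h𝒞n 𝓑 h𝓑 γ p hbig
  · intro 𝒞 h𝒞 δ hδ
    have hμ' : ∀ A ∈ 𝒞, ∃ e : Ordinal.{u}, e < μ ∧ 1 ≤ e ∧
        ∃ ρ < Ordinal.omega0.{u} ^ e, ¬ big A ρ ∅ := by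
      intro A hA
      obtain ⟨herA, ρ, hρ, hnb⟩ := h𝒞 A hA
      obtain ⟨e0, he0μ, hρe0⟩ := (Ordinal.lt_opow_of_isSuccLimit Ordinal.omega0_ne_zero hl).mp hρ
      refine ⟨max e0 1, max_lt he0μ (Ordinal.one_lt_of_isSuccLimit hl), le_max_right _ _, ρ, ?_, hnb⟩
      exact lt_of_lt_of_le hρe0
        (Ordinal.opow_le_opow_right Ordinal.omega0_pos (le_max_left _ _))
    choose! ex hex1 hex2 hex3 using hμ'
    classical
    set μ' := max (𝒞.sup ex) 1 with hμ'def
    have hμ'lt : μ' < μ := by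
      apply max_lt ?_ (Ordinal.one_lt_of_isSuccLimit hl)
      rcases Finset.eq_empty_or_nonempty 𝒞 with rfl | hne
      · simpa using hl.pos
      · exact (Finset.sup_lt_iff hl.pos).mpr (fun A hA => hex1 A hA)
    have SMμ' : SMstmt μ' := IH μ' hμ'lt (le_max_right _ _)
    have h𝒞' : ∀ A ∈ 𝒞, Hereditary A ∧ ∃ ρ < Ordinal.omega0.{u} ^ μ', ¬ big A ρ ∅ := by
      intro A hA
      obtain ⟨herA, _⟩ := h𝒞 A hA
      obtain ⟨ρ, hρ, hnb⟩ := hex3 A hA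
      refine ⟨herA, ρ, ?_, hnb⟩
      exact lt_of_lt_of_le hρ (Ordinal.opow_le_opow_right Ordinal.omega0_pos
        ((Finset.le_sup hA).trans (le_max_left _ _)))
    obtain ⟨ι, hι, hext⟩ := SMμ' 𝒞 h𝒞' δ hδ
    exact ⟨ι, lt_trans hι ((Ordinal.opow_lt_opow_iff_right Ordinal.one_lt_omega0).mpr hμ'lt),
      hext⟩

open Filter in
/-- Let `(𝒢ₙ)` be regular families, `𝒢₀` containing all singletons, with
`CB(𝒢ₙ) ≤ ω^ξ` for all `n` (`0 < ξ < ω₁`), and let `1 = θ₀ > θ₁ > ⋯ → 0`.  Then for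
`0 < ε ≤ 1` the family of finite sets all of whose convex combinations have mixed
Schreier norm `≥ ε` has Cantor–Bendixson index strictly less than `ω^ξ`. -/
theorem mixedSchreier_convex_CB (G : ℕ → Set (Finset ℕ)) (hreg : ∀ n, IsRegularFam (G n))
    (hsing : ∀ i : ℕ, ({i} : Finset ℕ) ∈ G 0) (θ : ℕ → ℝ) (hθ0 : θ 0 = 1)
    (hθanti : StrictAnti θ) (hθlim : Tendsto θ atTop (nhds 0))
    (ξ : Ordinal) (hξ0 : 0 < ξ) (hξ : ξ < (Cardinal.aleph 1).ord)
    (hCB : ∀ n, cbIter (toCantor '' G n) (Ordinal.omega0 ^ ξ) = ∅)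
    (ε : ℝ) (hε0 : 0 < ε) (hε1 : ε ≤ 1) :
    ∃ ζ : Ordinal, ζ < Ordinal.omega0 ^ ξ ∧
      cbIter (toCantor ''
        {F : Finset ℕ | ∀ x : ℕ →₀ ℝ, ↑x.support ⊆ (↑F : Set ℕ) → (∀ i, 0 ≤ x i) →
          (∑ i ∈ F, x i) = 1 → ε ≤ mixedNorm G θ x}) ζ = ∅ := by
  classical
  set 𝓕 := {F : Finset ℕ | ∀ x : ℕ →₀ ℝ, ↑x.support ⊆ (↑F : Set ℕ) → (∀ i, 0 ≤ x i) →
    (∑ i ∈ F, x i) = 1 → ε ≤ mixedNorm G θ x} with h𝓕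
  have h𝓕her : Hereditary 𝓕 := by
    intro E F hEF hF
    intro x hsupp hpos hsum
    apply hF x (hsupp.trans (Finset.coe_subset.mpr hEF)) hpos
    rw [← hsum]
    refine (Finset.sum_subset hEF ?_).symm
    intro i _ hiE
    by_contra hne
    exact hiE (by exact_mod_cast hsupp (by exact_mod_cast Finsupp.mem_support_iff.mpr hne))
  have hθpos : ∀ n, 0 < θ n := by
    intro n
    by_contra hc
    push_neg at hc
    have h1 : θ (n + 1) < θ n := hθanti (Nat.lt_succ_self n)
    have h2 : θ (n + 1) < 0 := lt_of_lt_of_le h1 hc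
    have h3 : ∀ᶠ k in atTop, θ (n + 1) < θ k := hθlim.eventually (eventually_gt_nhds h2)
    obtain ⟨k, hk1, hk2⟩ := (h3.and (eventually_gt_atTop (n + 1))).exists
    exact absurd hk1 (not_lt.mpr (hθanti hk2).le)
  have hθ1 : ∀ n, θ n ≤ 1 := by
    intro n
    rcases Nat.eq_zero_or_pos n with rfl | hn
    · rw [hθ0]
    · exact le_of_lt (hθ0 ▸ hθanti hn)
  have hev : ∀ᶠ k in atTop, θ k < ε / 2 :=
    hθlim.eventually (eventually_lt_nhds (by linarith))
  obtain ⟨N, hN⟩ := hev.exists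
  set 𝒞 : Finset (Set (Finset ℕ)) := (Finset.range N).image (fun n => G n) with h𝒞def
  have hΛ : Order.IsSuccLimit (Ordinal.omega0 ^ ξ) :=
    Ordinal.isSuccLimit_opow_left Ordinal.isSuccLimit_omega0 hξ0.ne'
  have h𝒞 : ∀ A ∈ 𝒞, Hereditary A ∧ ∃ ρ < Ordinal.omega0 ^ ξ, ¬ big A ρ ∅ := by
    intro A hA
    obtain ⟨n, _, rfl⟩ := Finset.mem_image.mp hA
    obtain ⟨hcomp, hher, hspr⟩ := hreg n
    exact ⟨hher, exists_small_rank hher hspr hΛ (hCB n)⟩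
  obtain ⟨ι, hι, hext⟩ := SM_all ξ (Ordinal.one_le_iff_ne_zero.mpr hξ0.ne') 𝒞 h𝒞 (ε / 2)
    (by linarith)
  refine ⟨Order.succ ι, hΛ.succ_lt hι, ?_⟩
  apply cbIter_empty_of_not_big h𝓕her
  intro hbig
  have hbig' : big 𝓕 (0 + ι) ∅ := by rwa [zero_add]
  obtain ⟨F, x, hsub, hbigF, hsep, hsupp, hpos, htot, hsmall⟩ := hext 𝓕 h𝓕her 0 ∅ hbig'
  have hF𝓕 : F ∈ 𝓕 := by
    have := hbigF
    rw [big_zero] at this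
    exact this
  have hsuppF' : x.support ⊆ F := by
    intro i hi
    have h4 := hsupp hi
    simpa using h4
  have hsuppF : ↑x.support ⊆ (↑F : Set ℕ) := Finset.coe_subset.mpr hsuppF'
  have hsum1 : (∑ i ∈ F, x i) = 1 := by
    rw [← htot]
    exact wsum_eq_tot_of_subset hsuppF'
  have hεle : ε ≤ mixedNorm G θ x := hF𝓕 x hsuppF hpos hsum1
  have habs : ∀ E : Finset ℕ, (∑ i ∈ E, |x i|) = wsum x E := by
    intro E
    exact Finset.sum_congr rfl (fun i _ => abs_of_nonneg (hpos i))
  have hsch0 : ∀ n, 0 ≤ schNorm (G n) x := by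
    intro n
    apply Real.sSup_nonneg
    rintro r ⟨E, _, rfl⟩
    positivity
  have hschle : ∀ n, schNorm (G n) x ≤ 1 := by
    intro n
    apply Real.sSup_le ?_ (by norm_num)
    rintro r ⟨E, _, rfl⟩
    rw [habs E]
    calc wsum x E ≤ tot x := wsum_le_tot hpos E
      _ = 1 := htot
  have hsch_small : ∀ n < N, schNorm (G n) x ≤ ε / 2 := by
    intro n hn
    apply Real.sSup_le ?_ (by linarith)
    rintro r ⟨E, hE, rfl⟩
    rw [habs E]
    exact (hsmall (G n) (Finset.mem_image_of_mem _ (Finset.mem_range.mpr hn)) E hE).le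
  have hmix : mixedNorm G θ x ≤ ε / 2 := by
    rw [mixedNorm]
    apply ciSup_le
    intro n
    by_cases hn : n < N
    · calc θ n * schNorm (G n) x ≤ 1 * (ε / 2) :=
          mul_le_mul (hθ1 n) (hsch_small n hn) (hsch0 n) (by norm_num)
        _ = ε / 2 := one_mul _
    · push_neg at hn
      have hθn : θ n ≤ θ N := by
        rcases eq_or_lt_of_le hn with rfl | h
        · exact le_refl _
        · exact (hθanti h).le
      calc θ n * schNorm (G n) x ≤ θ n * 1 :=
          mul_le_mul_of_nonneg_left (hschle n) (hθpos n).le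
        _ = θ n := mul_one _
        _ ≤ θ N := hθn
        _ ≤ ε / 2 := hN.le
  linarith
end
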